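/- arXiv:2206.10968 — 2 statements merged into one kernel-verified Lean document; each statement's English description precedes it below -/
import Mathlib

section
/- Let W : X1 × X2 → Y be a MAC on finite alphabets invariant under the action of a group G, i.e. W(g·y | g·x1, g·x2) = W(y|x1,x2) for all g ∈ G. Write O_G(S) for the set of orbits of G on S, write z_T for the projection of an orbit z onto a factor T (itself an orbit), and W(w) := W(y|x1,x2) for any (x1,x2,y) ∈ w (well-defined by invariance). Then for all positive integers k1, k2, S^NS(W,k1,k2) equals the value of the following linear program over real families r, r^1, r^2 indexed by w ∈ O_G(X1×X2×Y) and p indexed by u ∈ O_G(X1×X2): maximize (1/(k1 k2)) Σ_w W(w) r_w subject to: Σ_{w : w_Y = v} r_w = |v| for all v ∈ O_G(Y); Σ_{w : w_{X2 Y} = v2} r^1_w = k1 Σ_{w : w_{X2 Y} = v2} r_w for all v2 ∈ O_G(X2×Y); Σ_{w : w_{X1 Y} = v1} r^2_w = k2 Σ_{w : w_{X1 Y} = v1} r_w for all v1 ∈ O_G(X1×Y); Σ_{u : u_{X2} = (v2)_{X2}} p_u = (|(v2)_{X2}|/|v2|) k1 Σ_{w : w_{X2 Y} = v2} r^2_w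 for all v2 ∈ O_G(X2×Y); Σ_{u : u_{X1} = (v1)_{X1}} p_u = (|(v1)_{X1}|/|v1|) k2 Σ_{w : w_{X1 Y} = v1} r^1_w for all v1 ∈ O_G(X1×Y); 0 ≤ r_w, r_w ≤ r^1_w ≤ (|w|/|w_{X1 X2}|) p_{w_{X1 X2}}, r_w ≤ r^2_w ≤ (|w|/|w_{X1 X2}|) p_{w_{X1 X2}}, and (|w|/|w_{X1 X2}|) p_{w_{X1 X2}} − r^1_w − r^2_w + r_w ≥ 0 for all w ∈ O_G(X1×X2×Y). -/
open Finset

/-- A tripartite non-signaling box `P(x1,x2,(j1,j2)|i1,i2,y)` between the two senders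
and the receiver, with `k1` and `k2` messages.  Arguments of `P` are in the order
`x1 x2 j1 j2 i1 i2 y`. -/
def IsNSBox {X1 X2 Y : Type*} [Fintype X1] [Fintype X2] [Fintype Y] (k1 k2 : ℕ)
    (P : X1 → X2 → Fin k1 → Fin k2 → Fin k1 → Fin k2 → Y → ℝ) : Prop :=
  (∀ x1 x2 j1 j2 i1 i2 y, 0 ≤ P x1 x2 j1 j2 i1 i2 y) ∧
  (∀ i1 i2 y, ∑ x1, ∑ x2, ∑ j1, ∑ j2, P x1 x2 j1 j2 i1 i2 y = 1) ∧
  (∀ x2 j1 j2 i1 i1' i2 y,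
    ∑ x1, P x1 x2 j1 j2 i1 i2 y = ∑ x1, P x1 x2 j1 j2 i1' i2 y) ∧
  (∀ x1 j1 j2 i1 i2 i2' y,
    ∑ x2, P x1 x2 j1 j2 i1 i2 y = ∑ x2, P x1 x2 j1 j2 i1 i2' y) ∧
  (∀ x1 x2 i1 i2 y y',
    ∑ j1, ∑ j2, P x1 x2 j1 j2 i1 i2 y = ∑ j1, ∑ j2, P x1 x2 j1 j2 i1 i2 y')

/-- `S^{NS}(W,k1,k2)`: maximum joint success probability with (tripartite)
non-signaling assistance between both senders and the receiver. -/
noncomputable def SNS {X1 X2 Y : Type*} [Fintype X1] [Fintype X2] [Fintype Y]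
    (W : X1 → X2 → Y → ℝ) (k1 k2 : ℕ) : ℝ :=
  sSup {s : ℝ | ∃ P : X1 → X2 → Fin k1 → Fin k2 → Fin k1 → Fin k2 → Y → ℝ,
    IsNSBox k1 k2 P ∧
    s = (1 / ((k1 : ℝ) * (k2 : ℝ))) * ∑ i1, ∑ i2, ∑ x1, ∑ x2, ∑ y,
      W x1 x2 y * P x1 x2 i1 i2 i1 i2 y}

open scoped Classical

/-- `s` is an orbit of the action of a group `G` on `T`. -/
def IsOrbit (G : Type*) [Group G] {T : Type*} [MulAction G T] (s : Set T) : Prop :=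
  ∃ t : T, s = MulAction.orbit G t

/-- The (common) value of an invariant channel `W` on an orbit `w ⊆ X1 × X2 × Y`. -/
noncomputable def Wval {X1 X2 Y : Type*} (W : X1 → X2 → Y → ℝ)
    (w : Set (X1 × X2 × Y)) : ℝ :=
  if h : w.Nonempty then W h.some.1 h.some.2.1 h.some.2.2 else 0


set_option linter.unusedSectionVars false
set_option linter.unusedVariables false
set_option maxHeartbeats 1600000



section OrbLemmas

variable {G : Type*} [Group G] {α β : Type*} [Fintype α] [Fintype β]
  [MulAction G α] [MulAction G β]

/-- The finset of orbits. -/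
noncomputable def orbF (G : Type*) [Group G] (α : Type*) [Fintype α] [MulAction G α] :
    Finset (Set α) := Finset.univ.image (fun a => MulAction.orbit G a)

lemma mem_orbF {w : Set α} : w ∈ orbF G α ↔ IsOrbit G w := by
  simp [orbF, IsOrbit, eq_comm]

lemma finsum_mem_orbF (Q : Set α → Prop) [DecidablePred Q] (F : Set α → ℝ) :
    (∑ᶠ w ∈ {w : Set α | IsOrbit G w ∧ Q w}, F w)
      = ∑ w ∈ (orbF G α).filter Q, F w := by
  have h : {w : Set α | IsOrbit G w ∧ Q w} = ↑((orbF G α).filter Q) := by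
    ext w; simp [mem_orbF]
  rw [h, finsum_mem_coe_finset]

lemma finsum_mem_orbF' (F : Set α → ℝ) :
    (∑ᶠ w ∈ {w : Set α | IsOrbit G w}, F w) = ∑ w ∈ orbF G α, F w := by
  have h : {w : Set α | IsOrbit G w} = ↑(orbF G α) := by
    ext w; simp [mem_orbF]
  rw [h, finsum_mem_coe_finset]

lemma image_orbit (f : α → β) (hf : ∀ (g : G) (a : α), f (g • a) = g • f a) (a : α) :
    f '' MulAction.orbit G a = MulAction.orbit G (f a) := by
  ext b
  simp only [Set.mem_image, MulAction.mem_orbit_iff]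
  constructor
  · rintro ⟨t, ⟨g, rfl⟩, rfl⟩; exact ⟨g, (hf g a).symm⟩
  · rintro ⟨g, rfl⟩; exact ⟨g • a, ⟨g, rfl⟩, hf g a⟩

lemma mem_orbit_self' (a : α) : a ∈ MulAction.orbit G a := MulAction.mem_orbit_self a

lemma orbit_toFinset_card (a : α) :
    (MulAction.orbit G a).ncard = (Finset.univ.filter (· ∈ MulAction.orbit G a)).card := by
  rw [Set.ncard_eq_toFinset_card' ]
  congr 1
  ext t; simp

lemma orbit_ncard_pos (a : α) : 0 < (MulAction.orbit G a).ncard := by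
  have : (MulAction.orbit G a).Nonempty := ⟨a, MulAction.mem_orbit_self a⟩
  exact this.ncard_pos (Set.toFinite _)

end OrbLemmas


section Fib
variable {G : Type*} [Group G] {α β : Type*} [Fintype α] [Fintype β]
  [MulAction G α] [MulAction G β]

-- image of a fiber under g •
lemma fiber_smul (f : α → β) (hf : ∀ (g : G) (a : α), f (g • a) = g • f a)
    (a : α) (b : β) (g : G) :
    Finset.image (fun t => g • t) (Finset.univ.filter
        (fun t => t ∈ MulAction.orbit G a ∧ f t = b))
      = Finset.univ.filter (fun t => t ∈ MulAction.orbit G a ∧ f t = g • b) := by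
  ext t
  simp only [Finset.mem_image, Finset.mem_filter, Finset.mem_univ, true_and]
  constructor
  · rintro ⟨s, ⟨hs, rfl⟩, rfl⟩
    refine ⟨?_, by rw [hf]⟩
    rw [← MulAction.smul_orbit (g := g) (a := a)]
    exact Set.smul_mem_smul_set hs
  · rintro ⟨ht, hfb⟩
    refine ⟨g⁻¹ • t, ⟨?_, ?_⟩, by simp⟩
    · rw [← MulAction.smul_orbit (g := g⁻¹) (a := a)]
      exact Set.smul_mem_smul_set ht
    · rw [hf]
      rw [hfb]
      simp

lemma fiber_card_eq (f : α → β) (hf : ∀ (g : G) (a : α), f (g • a) = g • f a)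
    (a : α) {b b' : β} (hb : b ∈ MulAction.orbit G (f a)) (hb' : b' ∈ MulAction.orbit G (f a)) :
    (Finset.univ.filter (fun t => t ∈ MulAction.orbit G a ∧ f t = b)).card
      = (Finset.univ.filter (fun t => t ∈ MulAction.orbit G a ∧ f t = b')).card := by
  have h1 : b' ∈ MulAction.orbit G b := by
    have := MulAction.orbit_eq_iff.2 hb
    rw [this]; exact hb'
  obtain ⟨g, rfl⟩ := MulAction.mem_orbit_iff.1 h1
  rw [← fiber_smul f hf a b g, Finset.card_image_of_injective _ (MulAction.injective g)]

lemma card_orbit_fiber (f : α → β) (hf : ∀ (g : G) (a : α), f (g • a) = g • f a)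
    (a : α) {b : β} (hb : b ∈ MulAction.orbit G (f a)) :
    (MulAction.orbit G a).ncard
      = (MulAction.orbit G (f a)).ncard *
        (Finset.univ.filter (fun t => t ∈ MulAction.orbit G a ∧ f t = b)).card := by
  classical
  have hmaps : ∀ t ∈ Finset.univ.filter (· ∈ MulAction.orbit G a),
      f t ∈ Finset.univ.filter (· ∈ MulAction.orbit G (f a)) := by
    intro t ht
    simp only [Finset.mem_filter, Finset.mem_univ, true_and] at ht ⊢
    obtain ⟨g, rfl⟩ := MulAction.mem_orbit_iff.1 ht
    rw [hf]; exact MulAction.mem_orbit _ g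
  have h := Finset.card_eq_sum_card_fiberwise hmaps
  have horb : (MulAction.orbit G a).ncard = (Finset.univ.filter (· ∈ MulAction.orbit G a)).card := by
    rw [Set.ncard_eq_toFinset_card']; congr 1; ext t; simp
  have horb' : (MulAction.orbit G (f a)).ncard
      = (Finset.univ.filter (· ∈ MulAction.orbit G (f a))).card := by
    rw [Set.ncard_eq_toFinset_card']; congr 1; ext t; simp
  rw [horb, h, horb']
  rw [Finset.card_eq_sum_ones (Finset.univ.filter (· ∈ MulAction.orbit G (f a))), Finset.sum_mul]
  refine Finset.sum_congr rfl ?_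
  intro b' hb'
  simp only [Finset.mem_filter, Finset.mem_univ, true_and] at hb'
  rw [one_mul, Finset.filter_filter]
  exact fiber_card_eq f hf a hb' hb

/-- real version: fiber card = |orbit a| / |orbit (f a)| -/
lemma fiber_card_real (f : α → β) (hf : ∀ (g : G) (a : α), f (g • a) = g • f a)
    (a : α) {b : β} (hb : b ∈ MulAction.orbit G (f a)) :
    ((Finset.univ.filter (fun t => t ∈ MulAction.orbit G a ∧ f t = b)).card : ℝ)
      = ((MulAction.orbit G a).ncard : ℝ) / ((MulAction.orbit G (f a)).ncard : ℝ) := by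
  have h := card_orbit_fiber f hf a hb
  have hpos : (0:ℝ) < ((MulAction.orbit G (f a)).ncard : ℝ) := by
    have : (MulAction.orbit G (f a)).Nonempty := ⟨f a, MulAction.mem_orbit_self _⟩
    exact_mod_cast this.ncard_pos (Set.toFinite _)
  field_simp
  rw [mul_comm]
  exact_mod_cast h.symm

/-- Summing `φ ∘ f` over an orbit. -/
lemma sum_comp_orbit (f : α → β) (hf : ∀ (g : G) (a : α), f (g • a) = g • f a)
    (a : α) (φ : β → ℝ) :
    ∑ t ∈ Finset.univ.filter (· ∈ MulAction.orbit G a), φ (f t)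
      = ((MulAction.orbit G a).ncard : ℝ) / ((MulAction.orbit G (f a)).ncard : ℝ) *
        ∑ b ∈ Finset.univ.filter (· ∈ MulAction.orbit G (f a)), φ b := by
  have hmaps : ∀ t ∈ Finset.univ.filter (· ∈ MulAction.orbit G a),
      f t ∈ Finset.univ.filter (· ∈ MulAction.orbit G (f a)) := by
    intro t ht
    simp only [Finset.mem_filter, Finset.mem_univ, true_and] at ht ⊢
    obtain ⟨g, rfl⟩ := MulAction.mem_orbit_iff.1 ht
    rw [hf]; exact MulAction.mem_orbit _ g
  rw [← Finset.sum_fiberwise_of_maps_to hmaps (fun t => φ (f t)), Finset.mul_sum]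
  refine Finset.sum_congr rfl ?_
  intro b hb
  simp only [Finset.mem_filter, Finset.mem_univ, true_and] at hb
  have : ∑ t ∈ (Finset.univ.filter (· ∈ MulAction.orbit G a)).filter (fun t => f t = b),
      φ (f t) = ∑ t ∈ (Finset.univ.filter (· ∈ MulAction.orbit G a)).filter (fun t => f t = b),
      φ b := by
    refine Finset.sum_congr rfl ?_; intro t ht
    simp only [Finset.mem_filter] at ht; rw [ht.2]
  rw [this, Finset.sum_const, nsmul_eq_mul, Finset.filter_filter]
  rw [fiber_card_real f hf a hb]

end Fib

section P3
variable {G : Type*} [Group G] {α β : Type*} [Fintype α] [Fintype β]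
  [MulAction G α] [MulAction G β]

/-- Partition of a sum over `α` according to orbits satisfying `Q`. -/
lemma sum_orbits (Q : Set α → Prop) [DecidablePred Q] (h : α → ℝ) :
    ∑ w ∈ (orbF G α).filter Q, ∑ t ∈ Finset.univ.filter (· ∈ w), h t
      = ∑ t ∈ Finset.univ.filter (fun t => Q (MulAction.orbit G t)), h t := by
  have hmaps : ∀ t ∈ Finset.univ.filter (fun t => Q (MulAction.orbit G t)),
      MulAction.orbit G t ∈ (orbF G α).filter Q := by
    intro t ht
    simp only [Finset.mem_filter, Finset.mem_univ, true_and] at ht ⊢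
    exact ⟨Finset.mem_image.2 ⟨t, Finset.mem_univ t, rfl⟩, ht⟩
  rw [← Finset.sum_fiberwise_of_maps_to hmaps h]
  refine Finset.sum_congr rfl ?_
  intro w hw
  simp only [Finset.mem_filter, orbF, Finset.mem_image, Finset.mem_univ, true_and] at hw
  obtain ⟨⟨a, rfl⟩, hQ⟩ := hw
  refine Finset.sum_congr ?_ (fun _ _ => rfl)
  ext t
  simp only [Finset.mem_filter, Finset.mem_univ, true_and]
  constructor
  · intro ht
    have ht' : t ∈ MulAction.orbit G a := ht
    have he : MulAction.orbit G t = MulAction.orbit G a := MulAction.orbit_eq_iff.2 ht'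
    exact ⟨by rw [he]; exact hQ, he⟩
  · rintro ⟨hq, horb⟩
    have : t ∈ MulAction.orbit G a := by
      rw [← horb]; exact MulAction.mem_orbit_self t
    exact this

/-- Version for orbits with given image orbit. -/
lemma sum_orbits_img (f : α → β) (hf : ∀ (g : G) (a : α), f (g • a) = g • f a)
    (b : β) (h : α → ℝ)
    (himg : ∀ a : α, f '' MulAction.orbit G a = MulAction.orbit G (f a)) :
    ∑ w ∈ (orbF G α).filter (fun w => f '' w = MulAction.orbit G b),
        ∑ t ∈ Finset.univ.filter (· ∈ w), h t
      = ∑ t ∈ Finset.univ.filter (fun t => f t ∈ MulAction.orbit G b), h t := by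
  rw [sum_orbits (fun w => f '' w = MulAction.orbit G b) h]
  refine Finset.sum_congr ?_ (fun _ _ => rfl)
  ext t
  simp only [Finset.mem_filter, Finset.mem_univ, true_and, himg t]
  constructor
  · intro he; rw [← he]; exact MulAction.mem_orbit_self (f t)
  · intro ht; exact MulAction.orbit_eq_iff.2 ht

/-- Partition of the fiber of a point `b` according to orbits mapping onto `orbit b`. -/
lemma sum_orbits_point_fiber (f : α → β) (hf : ∀ (g : G) (a : α), f (g • a) = g • f a)
    (b : β) (h : α → ℝ)
    (himg : ∀ a : α, f '' MulAction.orbit G a = MulAction.orbit G (f a)) :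
    ∑ w ∈ (orbF G α).filter (fun w => f '' w = MulAction.orbit G b),
        ∑ t ∈ Finset.univ.filter (fun t => t ∈ w ∧ f t = b), h t
      = ∑ t ∈ Finset.univ.filter (fun t => f t = b), h t := by
  have hmaps : ∀ t ∈ Finset.univ.filter (fun t => f t = b),
      MulAction.orbit G t ∈ (orbF G α).filter (fun w => f '' w = MulAction.orbit G b) := by
    intro t ht
    simp only [Finset.mem_filter, Finset.mem_univ, true_and] at ht ⊢
    refine ⟨Finset.mem_image.2 ⟨t, Finset.mem_univ t, rfl⟩, ?_⟩
    rw [himg t, ht]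
  rw [← Finset.sum_fiberwise_of_maps_to hmaps h]
  refine Finset.sum_congr rfl ?_
  intro w hw
  simp only [Finset.mem_filter, orbF, Finset.mem_image, Finset.mem_univ, true_and] at hw
  obtain ⟨⟨a, rfl⟩, hQ⟩ := hw
  refine Finset.sum_congr ?_ (fun _ _ => rfl)
  ext t
  simp only [Finset.mem_filter, Finset.mem_univ, true_and]
  constructor
  · rintro ⟨ht, hfb⟩
    have ht' : t ∈ MulAction.orbit G a := ht
    exact ⟨hfb, MulAction.orbit_eq_iff.2 ht'⟩
  · rintro ⟨hfb, horb⟩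
    refine ⟨?_, hfb⟩
    have : t ∈ MulAction.orbit G a := by
      rw [← horb]; exact MulAction.mem_orbit_self t
    exact this

end P3

section Helpers
variable {A B C D E : Type*} [Fintype A] [Fintype B] [Fintype C] [Fintype D] [Fintype E]

lemma cycL3 (f : A → B → C → ℝ) :
    ∑ a, ∑ b, ∑ c, f a b c = ∑ b, ∑ c, ∑ a, f a b c := by
  rw [Finset.sum_comm]
  exact Finset.sum_congr rfl fun b _ => Finset.sum_comm

lemma cycL4 (f : A → B → C → D → ℝ) :
    ∑ a, ∑ b, ∑ c, ∑ d, f a b c d = ∑ b, ∑ c, ∑ d, ∑ a, f a b c d := by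
  rw [Finset.sum_comm]
  exact Finset.sum_congr rfl fun b _ => cycL3 _

lemma cycL5 (f : A → B → C → D → E → ℝ) :
    ∑ a, ∑ b, ∑ c, ∑ d, ∑ e, f a b c d e = ∑ b, ∑ c, ∑ d, ∑ e, ∑ a, f a b c d e := by
  rw [Finset.sum_comm]
  exact Finset.sum_congr rfl fun b _ => cycL4 _

lemma swap24' (f : A → B → C → D → ℝ) :
    ∑ a, ∑ b, ∑ c, ∑ d, f a b c d = ∑ c, ∑ d, ∑ a, ∑ b, f a b c d := by
  rw [cycL4, cycL4]

lemma swap23_5 (f : A → B → C → D → E → ℝ) :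
    ∑ a, ∑ b, ∑ c, ∑ d, ∑ e, f a b c d e
      = ∑ d, ∑ e, ∑ a, ∑ b, ∑ c, f a b c d e := by
  rw [cycL5, cycL5, cycL5]

lemma sum_ite_const {n : ℕ} (i : Fin n) (A' B' : ℝ) :
    ∑ j : Fin n, (if j = i then A' else B') = A' + ((n : ℝ) - 1) * B' := by
  have h : ∀ j : Fin n, (if j = i then A' else B') = B' + (if j = i then A' - B' else 0) := by
    intro j; split_ifs <;> ring
  simp only [h, Finset.sum_add_distrib, Finset.sum_const, Finset.sum_ite_eq',
    Finset.mem_univ, if_true, Finset.card_univ, Fintype.card_fin, nsmul_eq_mul]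
  ring

end Helpers

/-- A feasible point of the pointwise (non-symmetrized) LP. -/
structure PtSol (X1 X2 Y : Type*) [Fintype X1] [Fintype X2] [Fintype Y]
    (k1 k2 : ℕ) where
  R : X1 → X2 → Y → ℝ
  R1 : X1 → X2 → Y → ℝ
  R2 : X1 → X2 → Y → ℝ
  Pp : X1 → X2 → ℝ
  hR0 : ∀ x1 x2 y, 0 ≤ R x1 x2 y
  hRR1 : ∀ x1 x2 y, R x1 x2 y ≤ R1 x1 x2 y
  hRR2 : ∀ x1 x2 y, R x1 x2 y ≤ R2 x1 x2 y
  hR1P : ∀ x1 x2 y, R1 x1 x2 y ≤ Pp x1 x2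
  hR2P : ∀ x1 x2 y, R2 x1 x2 y ≤ Pp x1 x2
  hQuad : ∀ x1 x2 y, 0 ≤ Pp x1 x2 - R1 x1 x2 y - R2 x1 x2 y + R x1 x2 y
  hNorm : ∀ y, ∑ x1, ∑ x2, R x1 x2 y = 1
  hC3 : ∀ x2 y, ∑ x1, R1 x1 x2 y = (k1 : ℝ) * ∑ x1, R x1 x2 y
  hC4 : ∀ x1 y, ∑ x2, R2 x1 x2 y = (k2 : ℝ) * ∑ x2, R x1 x2 y
  hC5 : ∀ x2 y, ∑ x1, Pp x1 x2 = (k1 : ℝ) * ∑ x1, R2 x1 x2 y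
  hC6 : ∀ x1 y, ∑ x2, Pp x1 x2 = (k2 : ℝ) * ∑ x2, R1 x1 x2 y

section PtOfBox
variable {X1 X2 Y : Type*} [Fintype X1] [Fintype X2] [Fintype Y] {k1 k2 : ℕ}

theorem pt_of_box (P : X1 → X2 → Fin k1 → Fin k2 → Fin k1 → Fin k2 → Y → ℝ)
    (hP : IsNSBox k1 k2 P) (hk1 : 0 < k1) (hk2 : 0 < k2) :
    ∃ S : PtSol X1 X2 Y k1 k2,
      ∀ x1 x2 y, S.R x1 x2 y = ∑ i1, ∑ i2, P x1 x2 i1 i2 i1 i2 y := by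
  obtain ⟨hP0, hPn, hNS1, hNS2, hNSy⟩ := hP
  by_cases hY : Nonempty Y
  case neg =>
    refine ⟨⟨(fun _ _ _ => 0), (fun _ _ _ => 0), (fun _ _ _ => 0), (fun _ _ => 0),
      ?_, ?_, ?_, ?_, ?_, ?_, ?_, ?_, ?_, ?_, ?_⟩, ?_⟩ <;>
      first
        | (intro x1 x2 y; exact absurd ⟨y⟩ hY)
        | (intro x y; exact absurd ⟨y⟩ hY)
        | (intro y; exact absurd ⟨y⟩ hY)
  case pos =>
  obtain ⟨y0⟩ := hY
  set i10 : Fin k1 := ⟨0, hk1⟩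
  set i20 : Fin k2 := ⟨0, hk2⟩
  set R : X1 → X2 → Y → ℝ := fun x1 x2 y => ∑ i1, ∑ i2, P x1 x2 i1 i2 i1 i2 y with hR
  set R1 : X1 → X2 → Y → ℝ := fun x1 x2 y => ∑ i1, ∑ i2, ∑ j1, P x1 x2 j1 i2 i1 i2 y with hR1
  set R2 : X1 → X2 → Y → ℝ := fun x1 x2 y => ∑ i1, ∑ i2, ∑ j2, P x1 x2 i1 j2 i1 i2 y with hR2
  set Pp : X1 → X2 → ℝ :=
    fun x1 x2 => ∑ i1, ∑ i2, ∑ j1, ∑ j2, P x1 x2 j1 j2 i1 i2 y0 with hPp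
  have hPpEq : ∀ x1 x2 y, Pp x1 x2 = ∑ i1, ∑ i2, ∑ j1, ∑ j2, P x1 x2 j1 j2 i1 i2 y := by
    intro x1 x2 y
    exact Finset.sum_congr rfl fun i1 _ => Finset.sum_congr rfl fun i2 _ => hNSy x1 x2 i1 i2 y0 y
  refine ⟨⟨R, R1, R2, Pp, ?_, ?_, ?_, ?_, ?_, ?_, ?_, ?_, ?_, ?_, ?_⟩, fun _ _ _ => rfl⟩
  · -- hR0
    intro x1 x2 y
    exact Finset.sum_nonneg fun i1 _ => Finset.sum_nonneg fun i2 _ => hP0 _ _ _ _ _ _ _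
  · -- hRR1
    intro x1 x2 y
    refine Finset.sum_le_sum fun i1 _ => Finset.sum_le_sum fun i2 _ => ?_
    exact Finset.single_le_sum (f := fun j1 => P x1 x2 j1 i2 i1 i2 y)
      (fun j _ => hP0 _ _ _ _ _ _ _) (Finset.mem_univ i1)
  · -- hRR2
    intro x1 x2 y
    refine Finset.sum_le_sum fun i1 _ => Finset.sum_le_sum fun i2 _ => ?_
    exact Finset.single_le_sum (f := fun j2 => P x1 x2 i1 j2 i1 i2 y)
      (fun j _ => hP0 _ _ _ _ _ _ _) (Finset.mem_univ i2)
  · -- hR1P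
    intro x1 x2 y
    rw [hPpEq x1 x2 y]
    refine Finset.sum_le_sum fun i1 _ => Finset.sum_le_sum fun i2 _ =>
      Finset.sum_le_sum fun j1 _ => ?_
    exact Finset.single_le_sum (f := fun j2 => P x1 x2 j1 j2 i1 i2 y)
      (fun j _ => hP0 _ _ _ _ _ _ _) (Finset.mem_univ i2)
  · -- hR2P
    intro x1 x2 y
    rw [hPpEq x1 x2 y]
    have : ∀ i1 i2, ∑ j2, P x1 x2 i1 j2 i1 i2 y ≤ ∑ j1, ∑ j2, P x1 x2 j1 j2 i1 i2 y := by
      intro i1 i2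
      exact Finset.single_le_sum (f := fun j1 => ∑ j2, P x1 x2 j1 j2 i1 i2 y)
        (fun j _ => Finset.sum_nonneg fun _ _ => hP0 _ _ _ _ _ _ _) (Finset.mem_univ i1)
    exact Finset.sum_le_sum fun i1 _ => Finset.sum_le_sum fun i2 _ => this i1 i2
  · -- hQuad
    intro x1 x2 y
    rw [hPpEq x1 x2 y, hR, hR1, hR2]
    simp only
    rw [← Finset.sum_sub_distrib, ← Finset.sum_sub_distrib, ← Finset.sum_add_distrib]
    refine Finset.sum_nonneg fun i1 _ => ?_
    rw [← Finset.sum_sub_distrib, ← Finset.sum_sub_distrib, ← Finset.sum_add_distrib]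
    refine Finset.sum_nonneg fun i2 _ => ?_
    have key : ∑ j1, ∑ j2, P x1 x2 j1 j2 i1 i2 y - ∑ j1, P x1 x2 j1 i2 i1 i2 y
        - ∑ j2, P x1 x2 i1 j2 i1 i2 y + P x1 x2 i1 i2 i1 i2 y
        = ∑ j1 ∈ Finset.univ.erase i1, ∑ j2 ∈ Finset.univ.erase i2, P x1 x2 j1 j2 i1 i2 y := by
      have e1 : ∀ j1, ∑ j2, P x1 x2 j1 j2 i1 i2 y
          = (∑ j2 ∈ Finset.univ.erase i2, P x1 x2 j1 j2 i1 i2 y) + P x1 x2 j1 i2 i1 i2 y :=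
        fun j1 => (Finset.sum_erase_add Finset.univ _ (Finset.mem_univ i2)).symm
      have e2 : ∑ j1, ∑ j2 ∈ Finset.univ.erase i2, P x1 x2 j1 j2 i1 i2 y
          = (∑ j1 ∈ Finset.univ.erase i1, ∑ j2 ∈ Finset.univ.erase i2, P x1 x2 j1 j2 i1 i2 y)
            + ∑ j2 ∈ Finset.univ.erase i2, P x1 x2 i1 j2 i1 i2 y :=
        (Finset.sum_erase_add Finset.univ _ (Finset.mem_univ i1)).symm
      have e3 : ∑ j2, P x1 x2 i1 j2 i1 i2 y
          = (∑ j2 ∈ Finset.univ.erase i2, P x1 x2 i1 j2 i1 i2 y) + P x1 x2 i1 i2 i1 i2 y :=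
        (Finset.sum_erase_add Finset.univ _ (Finset.mem_univ i2)).symm
      simp only [e1, Finset.sum_add_distrib] at *
      linarith [e2]
    rw [key]
    exact Finset.sum_nonneg fun j1 _ => Finset.sum_nonneg fun j2 _ => hP0 _ _ _ _ _ _ _
  · -- hNorm
    intro y
    have hx : ∀ (j1 : Fin k1) (j2 : Fin k2) (i1 : Fin k1) (i2 : Fin k2),
        ∑ x1, ∑ x2, P x1 x2 j1 j2 i1 i2 y = ∑ x1, ∑ x2, P x1 x2 j1 j2 i10 i20 y := by
      intro j1 j2 i1 i2
      calc ∑ x1, ∑ x2, P x1 x2 j1 j2 i1 i2 y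
          = ∑ x2, ∑ x1, P x1 x2 j1 j2 i1 i2 y := Finset.sum_comm
        _ = ∑ x2, ∑ x1, P x1 x2 j1 j2 i10 i2 y :=
            Finset.sum_congr rfl fun x2 _ => hNS1 x2 j1 j2 i1 i10 i2 y
        _ = ∑ x1, ∑ x2, P x1 x2 j1 j2 i10 i2 y := Finset.sum_comm
        _ = ∑ x1, ∑ x2, P x1 x2 j1 j2 i10 i20 y :=
            Finset.sum_congr rfl fun x1 _ => hNS2 x1 j1 j2 i10 i2 i20 y
    calc ∑ x1, ∑ x2, R x1 x2 y
        = ∑ i1, ∑ i2, ∑ x1, ∑ x2, P x1 x2 i1 i2 i1 i2 y :=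
          swap24' (fun x1 x2 i1 i2 => P x1 x2 i1 i2 i1 i2 y)
      _ = ∑ i1, ∑ i2, ∑ x1, ∑ x2, P x1 x2 i1 i2 i10 i20 y :=
          Finset.sum_congr rfl fun i1 _ => Finset.sum_congr rfl fun i2 _ => hx i1 i2 i1 i2
      _ = ∑ x1, ∑ x2, ∑ i1, ∑ i2, P x1 x2 i1 i2 i10 i20 y :=
          (swap24' (fun x1 x2 i1 i2 => P x1 x2 i1 i2 i10 i20 y)).symm
      _ = 1 := hPn i10 i20 y
  · -- hC3
    intro x2 y
    calc ∑ x1, R1 x1 x2 y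
        = ∑ i1, ∑ i2, ∑ j1, ∑ x1, P x1 x2 j1 i2 i1 i2 y :=
          cycL4 (fun x1 i1 i2 j1 => P x1 x2 j1 i2 i1 i2 y)
      _ = ∑ i1, ∑ i2, ∑ j1, ∑ x1, P x1 x2 j1 i2 i10 i2 y :=
          Finset.sum_congr rfl fun i1 _ => Finset.sum_congr rfl fun i2 _ =>
            Finset.sum_congr rfl fun j1 _ => hNS1 x2 j1 i2 i1 i10 i2 y
      _ = (k1 : ℝ) * ∑ i2, ∑ j1, ∑ x1, P x1 x2 j1 i2 i10 i2 y := by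
          rw [Finset.sum_const, nsmul_eq_mul, Finset.card_univ, Fintype.card_fin]
      _ = (k1 : ℝ) * ∑ i1, ∑ i2, ∑ x1, P x1 x2 i1 i2 i10 i2 y := by
          congr 1
          exact Finset.sum_comm
      _ = (k1 : ℝ) * ∑ i1, ∑ i2, ∑ x1, P x1 x2 i1 i2 i1 i2 y := by
          congr 1
          exact Finset.sum_congr rfl fun i1 _ => Finset.sum_congr rfl fun i2 _ =>
            (hNS1 x2 i1 i2 i1 i10 i2 y).symm
      _ = (k1 : ℝ) * ∑ x1, R x1 x2 y := by
          congr 1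
          exact (cycL3 (fun x1 i1 i2 => P x1 x2 i1 i2 i1 i2 y)).symm
  · -- hC4
    intro x1 y
    calc ∑ x2, R2 x1 x2 y
        = ∑ i1, ∑ i2, ∑ j2, ∑ x2, P x1 x2 i1 j2 i1 i2 y :=
          cycL4 (fun x2 i1 i2 j2 => P x1 x2 i1 j2 i1 i2 y)
      _ = ∑ i1, ∑ i2, ∑ j2, ∑ x2, P x1 x2 i1 j2 i1 i20 y :=
          Finset.sum_congr rfl fun i1 _ => Finset.sum_congr rfl fun i2 _ =>
            Finset.sum_congr rfl fun j2 _ => hNS2 x1 i1 j2 i1 i2 i20 y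
      _ = ∑ i1, (k2 : ℝ) * ∑ j2, ∑ x2, P x1 x2 i1 j2 i1 i20 y := by
          refine Finset.sum_congr rfl fun i1 _ => ?_
          rw [Finset.sum_const, nsmul_eq_mul, Finset.card_univ, Fintype.card_fin]
      _ = (k2 : ℝ) * ∑ i1, ∑ j2, ∑ x2, P x1 x2 i1 j2 i1 i20 y := by
          rw [Finset.mul_sum]
      _ = (k2 : ℝ) * ∑ i1, ∑ i2, ∑ x2, P x1 x2 i1 i2 i1 i2 y := by
          congr 1
          exact Finset.sum_congr rfl fun i1 _ => Finset.sum_congr rfl fun i2 _ =>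
            (hNS2 x1 i1 i2 i1 i2 i20 y).symm
      _ = (k2 : ℝ) * ∑ x2, R x1 x2 y := by
          congr 1
          exact (cycL3 (fun x2 i1 i2 => P x1 x2 i1 i2 i1 i2 y)).symm
  · -- hC5
    intro x2 y
    calc ∑ x1, Pp x1 x2
        = ∑ x1, ∑ i1, ∑ i2, ∑ j1, ∑ j2, P x1 x2 j1 j2 i1 i2 y :=
          Finset.sum_congr rfl fun x1 _ => hPpEq x1 x2 y
      _ = ∑ i1, ∑ i2, ∑ j1, ∑ j2, ∑ x1, P x1 x2 j1 j2 i1 i2 y :=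
          cycL5 (fun x1 i1 i2 j1 j2 => P x1 x2 j1 j2 i1 i2 y)
      _ = ∑ i1, ∑ i2, ∑ j1, ∑ j2, ∑ x1, P x1 x2 j1 j2 i10 i2 y :=
          Finset.sum_congr rfl fun i1 _ => Finset.sum_congr rfl fun i2 _ =>
            Finset.sum_congr rfl fun j1 _ => Finset.sum_congr rfl fun j2 _ =>
              hNS1 x2 j1 j2 i1 i10 i2 y
      _ = (k1 : ℝ) * ∑ i2, ∑ j1, ∑ j2, ∑ x1, P x1 x2 j1 j2 i10 i2 y := by
          rw [Finset.sum_const, nsmul_eq_mul, Finset.card_univ, Fintype.card_fin]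
      _ = (k1 : ℝ) * ∑ j1, ∑ i2, ∑ j2, ∑ x1, P x1 x2 j1 j2 i10 i2 y := by
          congr 1
          exact Finset.sum_comm
      _ = (k1 : ℝ) * ∑ i1, ∑ i2, ∑ j2, ∑ x1, P x1 x2 i1 j2 i10 i2 y := rfl
      _ = (k1 : ℝ) * ∑ i1, ∑ i2, ∑ j2, ∑ x1, P x1 x2 i1 j2 i1 i2 y := by
          congr 1
          exact Finset.sum_congr rfl fun i1 _ => Finset.sum_congr rfl fun i2 _ =>
            Finset.sum_congr rfl fun j2 _ => (hNS1 x2 i1 j2 i1 i10 i2 y).symm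
      _ = (k1 : ℝ) * ∑ x1, R2 x1 x2 y := by
          congr 1
          exact (cycL4 (fun x1 i1 i2 j2 => P x1 x2 i1 j2 i1 i2 y)).symm
  · -- hC6
    intro x1 y
    calc ∑ x2, Pp x1 x2
        = ∑ x2, ∑ i1, ∑ i2, ∑ j1, ∑ j2, P x1 x2 j1 j2 i1 i2 y :=
          Finset.sum_congr rfl fun x2 _ => hPpEq x1 x2 y
      _ = ∑ i1, ∑ i2, ∑ j1, ∑ j2, ∑ x2, P x1 x2 j1 j2 i1 i2 y :=
          cycL5 (fun x2 i1 i2 j1 j2 => P x1 x2 j1 j2 i1 i2 y)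
      _ = ∑ i1, ∑ i2, ∑ j1, ∑ j2, ∑ x2, P x1 x2 j1 j2 i1 i20 y :=
          Finset.sum_congr rfl fun i1 _ => Finset.sum_congr rfl fun i2 _ =>
            Finset.sum_congr rfl fun j1 _ => Finset.sum_congr rfl fun j2 _ =>
              hNS2 x1 j1 j2 i1 i2 i20 y
      _ = ∑ i1, (k2 : ℝ) * ∑ j1, ∑ j2, ∑ x2, P x1 x2 j1 j2 i1 i20 y := by
          refine Finset.sum_congr rfl fun i1 _ => ?_
          rw [Finset.sum_const, nsmul_eq_mul, Finset.card_univ, Fintype.card_fin]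
      _ = (k2 : ℝ) * ∑ i1, ∑ j1, ∑ j2, ∑ x2, P x1 x2 j1 j2 i1 i20 y := by
          rw [Finset.mul_sum]
      _ = (k2 : ℝ) * ∑ i1, ∑ j2, ∑ j1, ∑ x2, P x1 x2 j1 j2 i1 i20 y := by
          congr 1
          exact Finset.sum_congr rfl fun i1 _ => Finset.sum_comm
      _ = (k2 : ℝ) * ∑ i1, ∑ i2, ∑ j1, ∑ x2, P x1 x2 j1 i2 i1 i20 y := rfl
      _ = (k2 : ℝ) * ∑ i1, ∑ i2, ∑ j1, ∑ x2, P x1 x2 j1 i2 i1 i2 y := by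
          congr 1
          exact Finset.sum_congr rfl fun i1 _ => Finset.sum_congr rfl fun i2 _ =>
            Finset.sum_congr rfl fun j1 _ => (hNS2 x1 j1 i2 i1 i2 i20 y).symm
      _ = (k2 : ℝ) * ∑ x2, R1 x1 x2 y := by
          congr 1
          exact (cycL4 (fun x2 i1 i2 j1 => P x1 x2 j1 i2 i1 i2 y)).symm
end PtOfBox

section BoxOfPt
variable {X1 X2 Y : Type*} [Fintype X1] [Fintype X2] [Fintype Y] {k1 k2 : ℕ}

lemma sumPp (S : PtSol X1 X2 Y k1 k2) (y : Y) :
    ∑ x1, ∑ x2, S.Pp x1 x2 = (k1 : ℝ) * k2 := by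
  calc ∑ x1, ∑ x2, S.Pp x1 x2 = ∑ x2, ∑ x1, S.Pp x1 x2 := Finset.sum_comm
    _ = ∑ x2, (k1 : ℝ) * ∑ x1, S.R2 x1 x2 y :=
        Finset.sum_congr rfl fun x2 _ => S.hC5 x2 y
    _ = (k1 : ℝ) * ∑ x2, ∑ x1, S.R2 x1 x2 y := by rw [Finset.mul_sum]
    _ = (k1 : ℝ) * ∑ x1, ∑ x2, S.R2 x1 x2 y := by rw [Finset.sum_comm]
    _ = (k1 : ℝ) * ∑ x1, (k2 : ℝ) * ∑ x2, S.R x1 x2 y := by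
        rw [Finset.sum_congr rfl fun x1 _ => S.hC4 x1 y]
    _ = (k1 : ℝ) * ((k2 : ℝ) * ∑ x1, ∑ x2, S.R x1 x2 y) := by rw [← Finset.mul_sum]
    _ = (k1 : ℝ) * k2 := by rw [S.hNorm y]; ring

theorem box_of_pt (W : X1 → X2 → Y → ℝ) (hW0 : ∀ x1 x2 y, 0 ≤ W x1 x2 y)
    (S : PtSol X1 X2 Y k1 k2) (hk1 : 0 < k1) (hk2 : 0 < k2) :
    ∃ P : X1 → X2 → Fin k1 → Fin k2 → Fin k1 → Fin k2 → Y → ℝ,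
      IsNSBox k1 k2 P ∧
      ∑ x1, ∑ x2, ∑ y, W x1 x2 y * S.R x1 x2 y
        ≤ ∑ i1, ∑ i2, ∑ x1, ∑ x2, ∑ y, W x1 x2 y * P x1 x2 i1 i2 i1 i2 y := by
  by_cases hY : Nonempty Y
  case neg =>
    refine ⟨fun _ _ _ _ _ _ _ => 0, ⟨?_, ?_, ?_, ?_, ?_⟩, ?_⟩
    · intro _ _ _ _ _ _ _; exact le_refl 0
    · intro _ _ y; exact absurd ⟨y⟩ hY
    · intro _ _ _ _ _ _ y; exact absurd ⟨y⟩ hY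
    · intro _ _ _ _ _ _ y; exact absurd ⟨y⟩ hY
    · intro _ _ _ _ y; exact absurd ⟨y⟩ hY
    · have hIE : IsEmpty Y := not_nonempty_iff.mp hY
      have h0 : ∀ (f : Y → ℝ), ∑ y : Y, f y = 0 := fun f => by simp
      simp [h0]
  obtain ⟨y0⟩ := hY
  have hk1R : (0:ℝ) < (k1 : ℝ) := by exact_mod_cast hk1
  have hk2R : (0:ℝ) < (k2 : ℝ) := by exact_mod_cast hk2
  set c : ℝ := (k1 : ℝ) * k2 with hc
  have hcpos : 0 < c := mul_pos hk1R hk2R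
  rcases Nat.lt_or_ge 1 k1 with hk1' | hk1'
  · rcases Nat.lt_or_ge 1 k2 with hk2' | hk2'
    · -- main case : k1 ≥ 2, k2 ≥ 2
      have h1 : (0:ℝ) < (k1 : ℝ) - 1 := by
        have : (1:ℝ) < (k1:ℝ) := by exact_mod_cast hk1'
        linarith
      have h2 : (0:ℝ) < (k2 : ℝ) - 1 := by
        have : (1:ℝ) < (k2:ℝ) := by exact_mod_cast hk2'
        linarith
      set A : X1 → X2 → Y → ℝ := fun x1 x2 y => S.R x1 x2 y / c with hA
      set B : X1 → X2 → Y → ℝ :=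
        fun x1 x2 y => (S.R2 x1 x2 y - S.R x1 x2 y) / (c * ((k2:ℝ)-1)) with hB
      set C : X1 → X2 → Y → ℝ :=
        fun x1 x2 y => (S.R1 x1 x2 y - S.R x1 x2 y) / (c * ((k1:ℝ)-1)) with hC'
      set D : X1 → X2 → Y → ℝ :=
        fun x1 x2 y => (S.Pp x1 x2 - S.R1 x1 x2 y - S.R2 x1 x2 y + S.R x1 x2 y) /
          (c * ((k1:ℝ)-1) * ((k2:ℝ)-1)) with hD
      set P : X1 → X2 → Fin k1 → Fin k2 → Fin k1 → Fin k2 → Y → ℝ :=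
        fun x1 x2 j1 j2 i1 i2 y =>
          if j1 = i1 then (if j2 = i2 then A x1 x2 y else B x1 x2 y)
          else (if j2 = i2 then C x1 x2 y else D x1 x2 y) with hPdef
      have eqAC : ∀ x2 y, ∑ x1, A x1 x2 y = ∑ x1, C x1 x2 y := by
        intro x2 y
        simp only [hA, hC']
        rw [← Finset.sum_div, ← Finset.sum_div, Finset.sum_sub_distrib, S.hC3 x2 y,
          div_eq_div_iff (by positivity) (by positivity)]
        ring
      have eqBD : ∀ x2 y, ∑ x1, B x1 x2 y = ∑ x1, D x1 x2 y := by
        intro x2 y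
        simp only [hB, hD]
        rw [← Finset.sum_div, ← Finset.sum_div, Finset.sum_sub_distrib]
        have e : ∑ x1, (S.Pp x1 x2 - S.R1 x1 x2 y - S.R2 x1 x2 y + S.R x1 x2 y)
            = (k1:ℝ) * ∑ x1, S.R2 x1 x2 y - (k1:ℝ) * ∑ x1, S.R x1 x2 y
              - ∑ x1, S.R2 x1 x2 y + ∑ x1, S.R x1 x2 y := by
          rw [Finset.sum_add_distrib, Finset.sum_sub_distrib, Finset.sum_sub_distrib,
            S.hC5 x2 y, S.hC3 x2 y]
          try ring
        rw [e, div_eq_div_iff (by positivity) (by positivity)]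
        ring
      have eqAB : ∀ x1 y, ∑ x2, A x1 x2 y = ∑ x2, B x1 x2 y := by
        intro x1 y
        simp only [hA, hB]
        rw [← Finset.sum_div, ← Finset.sum_div, Finset.sum_sub_distrib, S.hC4 x1 y,
          div_eq_div_iff (by positivity) (by positivity)]
        ring
      have eqCD : ∀ x1 y, ∑ x2, C x1 x2 y = ∑ x2, D x1 x2 y := by
        intro x1 y
        simp only [hC', hD]
        rw [← Finset.sum_div, ← Finset.sum_div, Finset.sum_sub_distrib]
        have e : ∑ x2, (S.Pp x1 x2 - S.R1 x1 x2 y - S.R2 x1 x2 y + S.R x1 x2 y)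
            = (k2:ℝ) * ∑ x2, S.R1 x1 x2 y - ∑ x2, S.R1 x1 x2 y
              - (k2:ℝ) * ∑ x2, S.R x1 x2 y + ∑ x2, S.R x1 x2 y := by
          rw [Finset.sum_add_distrib, Finset.sum_sub_distrib, Finset.sum_sub_distrib,
            S.hC6 x1 y, S.hC4 x1 y]
          try ring
        rw [e, div_eq_div_iff (by positivity) (by positivity)]
        ring
      have hsumj : ∀ x1 x2 (i1 : Fin k1) (i2 : Fin k2) y,
          ∑ j1, ∑ j2, P x1 x2 j1 j2 i1 i2 y = S.Pp x1 x2 / c := by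
        intro x1 x2 i1 i2 y
        have hinner : ∀ j1 : Fin k1, ∑ j2, P x1 x2 j1 j2 i1 i2 y
            = if j1 = i1 then (A x1 x2 y + ((k2:ℝ)-1) * B x1 x2 y)
              else (C x1 x2 y + ((k2:ℝ)-1) * D x1 x2 y) := by
          intro j1
          by_cases h : j1 = i1 <;>
            simp only [hPdef, h, if_true, if_false, sum_ite_const]
        rw [Finset.sum_congr rfl fun j1 _ => hinner j1, sum_ite_const]
        simp only [hA, hB, hC', hD]
        field_simp
        ring
      refine ⟨P, ⟨?_, ?_, ?_, ?_, ?_⟩, ?_⟩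
      · -- nonneg
        intro x1 x2 j1 j2 i1 i2 y
        simp only [hPdef, hA, hB, hC', hD]
        split_ifs <;> apply div_nonneg <;>
          first
            | positivity
            | linarith [S.hR0 x1 x2 y, S.hRR1 x1 x2 y, S.hRR2 x1 x2 y, S.hR1P x1 x2 y,
                S.hR2P x1 x2 y, S.hQuad x1 x2 y]
      · -- normalization
        intro i1 i2 y
        rw [Finset.sum_congr rfl fun x1 _ => Finset.sum_congr rfl fun x2 _ =>
          hsumj x1 x2 i1 i2 y]
        rw [Finset.sum_congr rfl fun x1 (_ : x1 ∈ Finset.univ) => (Finset.sum_div ..).symm,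
          ← Finset.sum_div, sumPp S y0]
        field_simp
        exact hc.symm
      · -- NS in i1
        intro x2 j1 j2 i1 i1' i2 y
        rcases eq_or_ne j1 i1 with h1' | h1' <;> rcases eq_or_ne j1 i1' with h2' | h2'
        · rw [← h1', ← h2']
        · have l : ∀ x1, P x1 x2 j1 j2 i1 i2 y = if j2 = i2 then A x1 x2 y else B x1 x2 y :=
            fun x1 => by simp only [hPdef]; rw [if_pos h1']
          have r : ∀ x1, P x1 x2 j1 j2 i1' i2 y = if j2 = i2 then C x1 x2 y else D x1 x2 y :=
            fun x1 => by simp only [hPdef]; rw [if_neg h2']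
          rw [Finset.sum_congr rfl fun x1 _ => l x1, Finset.sum_congr rfl fun x1 _ => r x1]
          rcases eq_or_ne j2 i2 with h3 | h3
          · rw [Finset.sum_congr rfl fun x1 (_ : x1 ∈ Finset.univ) => if_pos h3,
              Finset.sum_congr rfl fun x1 (_ : x1 ∈ Finset.univ) => if_pos h3]
            exact eqAC x2 y
          · rw [Finset.sum_congr rfl fun x1 (_ : x1 ∈ Finset.univ) => if_neg h3,
              Finset.sum_congr rfl fun x1 (_ : x1 ∈ Finset.univ) => if_neg h3]
            exact eqBD x2 y
        · have l : ∀ x1, P x1 x2 j1 j2 i1 i2 y = if j2 = i2 then C x1 x2 y else D x1 x2 y :=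
            fun x1 => by simp only [hPdef]; rw [if_neg h1']
          have r : ∀ x1, P x1 x2 j1 j2 i1' i2 y = if j2 = i2 then A x1 x2 y else B x1 x2 y :=
            fun x1 => by simp only [hPdef]; rw [if_pos h2']
          rw [Finset.sum_congr rfl fun x1 _ => l x1, Finset.sum_congr rfl fun x1 _ => r x1]
          rcases eq_or_ne j2 i2 with h3 | h3
          · rw [Finset.sum_congr rfl fun x1 (_ : x1 ∈ Finset.univ) => if_pos h3,
              Finset.sum_congr rfl fun x1 (_ : x1 ∈ Finset.univ) => if_pos h3]
            exact (eqAC x2 y).symm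
          · rw [Finset.sum_congr rfl fun x1 (_ : x1 ∈ Finset.univ) => if_neg h3,
              Finset.sum_congr rfl fun x1 (_ : x1 ∈ Finset.univ) => if_neg h3]
            exact (eqBD x2 y).symm
        · have l : ∀ x1, P x1 x2 j1 j2 i1 i2 y = if j2 = i2 then C x1 x2 y else D x1 x2 y :=
            fun x1 => by simp only [hPdef]; rw [if_neg h1']
          have r : ∀ x1, P x1 x2 j1 j2 i1' i2 y = if j2 = i2 then C x1 x2 y else D x1 x2 y :=
            fun x1 => by simp only [hPdef]; rw [if_neg h2']
          rw [Finset.sum_congr rfl fun x1 _ => l x1, Finset.sum_congr rfl fun x1 _ => r x1]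
      · -- NS in i2
        intro x1 j1 j2 i1 i2 i2' y
        rcases eq_or_ne j2 i2 with h1' | h1' <;> rcases eq_or_ne j2 i2' with h2' | h2'
        · rw [← h1', ← h2']
        · have l : ∀ x2, P x1 x2 j1 j2 i1 i2 y = if j1 = i1 then A x1 x2 y else C x1 x2 y :=
            fun x2 => by
              simp only [hPdef]
              by_cases h : j1 = i1 <;> simp only [h, if_true, if_false] <;> rw [if_pos h1']
          have r : ∀ x2, P x1 x2 j1 j2 i1 i2' y = if j1 = i1 then B x1 x2 y else D x1 x2 y :=
            fun x2 => by
              simp only [hPdef]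
              by_cases h : j1 = i1 <;> simp only [h, if_true, if_false] <;> rw [if_neg h2']
          rw [Finset.sum_congr rfl fun x2 _ => l x2, Finset.sum_congr rfl fun x2 _ => r x2]
          rcases eq_or_ne j1 i1 with h3 | h3
          · rw [Finset.sum_congr rfl fun x2 (_ : x2 ∈ Finset.univ) => if_pos h3,
              Finset.sum_congr rfl fun x2 (_ : x2 ∈ Finset.univ) => if_pos h3]
            exact eqAB x1 y
          · rw [Finset.sum_congr rfl fun x2 (_ : x2 ∈ Finset.univ) => if_neg h3,
              Finset.sum_congr rfl fun x2 (_ : x2 ∈ Finset.univ) => if_neg h3]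
            exact eqCD x1 y
        · have l : ∀ x2, P x1 x2 j1 j2 i1 i2 y = if j1 = i1 then B x1 x2 y else D x1 x2 y :=
            fun x2 => by
              simp only [hPdef]
              by_cases h : j1 = i1 <;> simp only [h, if_true, if_false] <;> rw [if_neg h1']
          have r : ∀ x2, P x1 x2 j1 j2 i1 i2' y = if j1 = i1 then A x1 x2 y else C x1 x2 y :=
            fun x2 => by
              simp only [hPdef]
              by_cases h : j1 = i1 <;> simp only [h, if_true, if_false] <;> rw [if_pos h2']
          rw [Finset.sum_congr rfl fun x2 _ => l x2, Finset.sum_congr rfl fun x2 _ => r x2]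
          rcases eq_or_ne j1 i1 with h3 | h3
          · rw [Finset.sum_congr rfl fun x2 (_ : x2 ∈ Finset.univ) => if_pos h3,
              Finset.sum_congr rfl fun x2 (_ : x2 ∈ Finset.univ) => if_pos h3]
            exact (eqAB x1 y).symm
          · rw [Finset.sum_congr rfl fun x2 (_ : x2 ∈ Finset.univ) => if_neg h3,
              Finset.sum_congr rfl fun x2 (_ : x2 ∈ Finset.univ) => if_neg h3]
            exact (eqCD x1 y).symm
        · have l : ∀ x2, P x1 x2 j1 j2 i1 i2 y = if j1 = i1 then B x1 x2 y else D x1 x2 y :=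
            fun x2 => by
              simp only [hPdef]
              by_cases h : j1 = i1 <;> simp only [h, if_true, if_false] <;> rw [if_neg h1']
          have r : ∀ x2, P x1 x2 j1 j2 i1 i2' y = if j1 = i1 then B x1 x2 y else D x1 x2 y :=
            fun x2 => by
              simp only [hPdef]
              by_cases h : j1 = i1 <;> simp only [h, if_true, if_false] <;> rw [if_neg h2']
          rw [Finset.sum_congr rfl fun x2 _ => l x2, Finset.sum_congr rfl fun x2 _ => r x2]
      · -- NS in y
        intro x1 x2 i1 i2 y y'
        rw [hsumj x1 x2 i1 i2 y, hsumj x1 x2 i1 i2 y']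
      · -- value
        have hdiag : ∀ x1 x2 (i1 : Fin k1) (i2 : Fin k2) y,
            P x1 x2 i1 i2 i1 i2 y = S.R x1 x2 y / c := by
          intro x1 x2 i1 i2 y; simp [hPdef, hA]
        have hv : ∀ (i1 : Fin k1) (i2 : Fin k2),
            ∑ x1, ∑ x2, ∑ y, W x1 x2 y * P x1 x2 i1 i2 i1 i2 y
              = (∑ x1, ∑ x2, ∑ y, W x1 x2 y * S.R x1 x2 y) / c := by
          intro i1 i2
          rw [Finset.sum_div]
          refine Finset.sum_congr rfl fun x1 _ => ?_
          rw [Finset.sum_div]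
          refine Finset.sum_congr rfl fun x2 _ => ?_
          rw [Finset.sum_div]
          refine Finset.sum_congr rfl fun y _ => ?_
          rw [hdiag x1 x2 i1 i2 y, mul_div_assoc]
        rw [Finset.sum_congr rfl fun i1 _ => Finset.sum_congr rfl fun i2 _ => hv i1 i2]
        rw [Finset.sum_const, Finset.sum_const, Finset.card_univ, Fintype.card_fin,
          nsmul_eq_mul, nsmul_eq_mul, Finset.card_univ, Fintype.card_fin, ← mul_assoc]
        rw [← hc, mul_div_cancel₀ _ (ne_of_gt hcpos)]
    · -- k1 ≥ 2, k2 = 1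
      have hk2e : k2 = 1 := le_antisymm hk2' hk2
      subst hk2e
      have h1 : (0:ℝ) < (k1 : ℝ) - 1 := by
        have : (1:ℝ) < (k1:ℝ) := by exact_mod_cast hk1'
        linarith
      set A : X1 → X2 → Y → ℝ := fun x1 x2 y => S.R2 x1 x2 y / c with hA
      set C : X1 → X2 → Y → ℝ :=
        fun x1 x2 y => (S.Pp x1 x2 - S.R2 x1 x2 y) / (c * ((k1:ℝ)-1)) with hC'
      set P : X1 → X2 → Fin k1 → Fin 1 → Fin k1 → Fin 1 → Y → ℝ :=
        fun x1 x2 j1 j2 i1 i2 y =>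
          if j1 = i1 then A x1 x2 y else C x1 x2 y with hPdef
      have eqAC : ∀ x2 y, ∑ x1, A x1 x2 y = ∑ x1, C x1 x2 y := by
        intro x2 y
        simp only [hA, hC']
        rw [← Finset.sum_div, ← Finset.sum_div, Finset.sum_sub_distrib, S.hC5 x2 y,
          div_eq_div_iff (by positivity) (by positivity)]
        ring
      have hsumj : ∀ x1 x2 (i1 : Fin k1) (i2 : Fin 1) y,
          ∑ j1, ∑ j2, P x1 x2 j1 j2 i1 i2 y = S.Pp x1 x2 / c := by
        intro x1 x2 i1 i2 y
        have hinner : ∀ j1 : Fin k1, ∑ j2 : Fin 1, P x1 x2 j1 j2 i1 i2 y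
            = if j1 = i1 then A x1 x2 y else C x1 x2 y := by
          intro j1
          rw [Fin.sum_univ_one]
        rw [Finset.sum_congr rfl fun j1 _ => hinner j1, sum_ite_const]
        simp only [hA, hC']
        have hc1 : c = (k1 : ℝ) := by rw [hc]; norm_num
        rw [hc1]
        field_simp
        ring
      refine ⟨P, ⟨?_, ?_, ?_, ?_, ?_⟩, ?_⟩
      · intro x1 x2 j1 j2 i1 i2 y
        simp only [hPdef, hA, hC']
        split_ifs <;> apply div_nonneg <;>
          first
            | positivity
            | linarith [S.hR0 x1 x2 y, S.hRR2 x1 x2 y, S.hR2P x1 x2 y]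
      · intro i1 i2 y
        rw [Finset.sum_congr rfl fun x1 _ => Finset.sum_congr rfl fun x2 _ =>
          hsumj x1 x2 i1 i2 y]
        rw [Finset.sum_congr rfl fun x1 (_ : x1 ∈ Finset.univ) => (Finset.sum_div ..).symm,
          ← Finset.sum_div, sumPp S y0]
        field_simp
        rw [hc]
      · intro x2 j1 j2 i1 i1' i2 y
        rcases eq_or_ne j1 i1 with h1' | h1' <;> rcases eq_or_ne j1 i1' with h2' | h2'
        · rw [← h1', ← h2']
        · have l : ∀ x1, P x1 x2 j1 j2 i1 i2 y = A x1 x2 y :=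
            fun x1 => by simp only [hPdef]; rw [if_pos h1']
          have r : ∀ x1, P x1 x2 j1 j2 i1' i2 y = C x1 x2 y :=
            fun x1 => by simp only [hPdef]; rw [if_neg h2']
          rw [Finset.sum_congr rfl fun x1 _ => l x1, Finset.sum_congr rfl fun x1 _ => r x1]
          exact eqAC x2 y
        · have l : ∀ x1, P x1 x2 j1 j2 i1 i2 y = C x1 x2 y :=
            fun x1 => by simp only [hPdef]; rw [if_neg h1']
          have r : ∀ x1, P x1 x2 j1 j2 i1' i2 y = A x1 x2 y :=
            fun x1 => by simp only [hPdef]; rw [if_pos h2']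
          rw [Finset.sum_congr rfl fun x1 _ => l x1, Finset.sum_congr rfl fun x1 _ => r x1]
          exact (eqAC x2 y).symm
        · have l : ∀ x1, P x1 x2 j1 j2 i1 i2 y = C x1 x2 y :=
            fun x1 => by simp only [hPdef]; rw [if_neg h1']
          have r : ∀ x1, P x1 x2 j1 j2 i1' i2 y = C x1 x2 y :=
            fun x1 => by simp only [hPdef]; rw [if_neg h2']
          rw [Finset.sum_congr rfl fun x1 _ => l x1, Finset.sum_congr rfl fun x1 _ => r x1]
      · intro x1 j1 j2 i1 i2 i2' y
        rw [Subsingleton.elim i2 i2']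
      · intro x1 x2 i1 i2 y y'
        rw [hsumj x1 x2 i1 i2 y, hsumj x1 x2 i1 i2 y']
      · have hdiag : ∀ x1 x2 (i1 : Fin k1) (i2 : Fin 1) y,
            P x1 x2 i1 i2 i1 i2 y = S.R2 x1 x2 y / c := by
          intro x1 x2 i1 i2 y; simp [hPdef, hA]
        have hv : ∀ (i1 : Fin k1) (i2 : Fin 1),
            ∑ x1, ∑ x2, ∑ y, W x1 x2 y * P x1 x2 i1 i2 i1 i2 y
              = (∑ x1, ∑ x2, ∑ y, W x1 x2 y * S.R2 x1 x2 y) / c := by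
          intro i1 i2
          rw [Finset.sum_div]
          refine Finset.sum_congr rfl fun x1 _ => ?_
          rw [Finset.sum_div]
          refine Finset.sum_congr rfl fun x2 _ => ?_
          rw [Finset.sum_div]
          refine Finset.sum_congr rfl fun y _ => ?_
          rw [hdiag x1 x2 i1 i2 y, mul_div_assoc]
        rw [Finset.sum_congr rfl fun i1 _ => Finset.sum_congr rfl fun i2 _ => hv i1 i2]
        rw [Finset.sum_const, Finset.sum_const, Finset.card_univ, Fintype.card_fin,
          nsmul_eq_mul, nsmul_eq_mul, Finset.card_univ, Fintype.card_fin, ← mul_assoc]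
        rw [← hc, mul_div_cancel₀ _ (ne_of_gt hcpos)]
        refine Finset.sum_le_sum fun x1 _ => Finset.sum_le_sum fun x2 _ =>
          Finset.sum_le_sum fun y _ => ?_
        exact mul_le_mul_of_nonneg_left (S.hRR2 x1 x2 y) (hW0 x1 x2 y)
  · -- k1 = 1
    have hk1e : k1 = 1 := le_antisymm hk1' hk1
    subst hk1e
    rcases Nat.lt_or_ge 1 k2 with hk2' | hk2'
    · -- k1 = 1, k2 ≥ 2
      have h2 : (0:ℝ) < (k2 : ℝ) - 1 := by
        have : (1:ℝ) < (k2:ℝ) := by exact_mod_cast hk2'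
        linarith
      set A : X1 → X2 → Y → ℝ := fun x1 x2 y => S.R1 x1 x2 y / c with hA
      set B : X1 → X2 → Y → ℝ :=
        fun x1 x2 y => (S.Pp x1 x2 - S.R1 x1 x2 y) / (c * ((k2:ℝ)-1)) with hB
      set P : X1 → X2 → Fin 1 → Fin k2 → Fin 1 → Fin k2 → Y → ℝ :=
        fun x1 x2 j1 j2 i1 i2 y =>
          if j2 = i2 then A x1 x2 y else B x1 x2 y with hPdef
      have eqAB : ∀ x1 y, ∑ x2, A x1 x2 y = ∑ x2, B x1 x2 y := by
        intro x1 y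
        simp only [hA, hB]
        rw [← Finset.sum_div, ← Finset.sum_div, Finset.sum_sub_distrib, S.hC6 x1 y,
          div_eq_div_iff (by positivity) (by positivity)]
        ring
      have hsumj : ∀ x1 x2 (i1 : Fin 1) (i2 : Fin k2) y,
          ∑ j1 : Fin 1, ∑ j2, P x1 x2 j1 j2 i1 i2 y = S.Pp x1 x2 / c := by
        intro x1 x2 i1 i2 y
        rw [Fin.sum_univ_one, sum_ite_const]
        simp only [hA, hB]
        have hc1 : c = (k2 : ℝ) := by rw [hc]; norm_num
        rw [hc1]
        field_simp
        ring
      refine ⟨P, ⟨?_, ?_, ?_, ?_, ?_⟩, ?_⟩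
      · intro x1 x2 j1 j2 i1 i2 y
        simp only [hPdef, hA, hB]
        split_ifs <;> apply div_nonneg <;>
          first
            | positivity
            | linarith [S.hR0 x1 x2 y, S.hRR1 x1 x2 y, S.hR1P x1 x2 y]
      · intro i1 i2 y
        rw [Finset.sum_congr rfl fun x1 _ => Finset.sum_congr rfl fun x2 _ =>
          hsumj x1 x2 i1 i2 y]
        rw [Finset.sum_congr rfl fun x1 (_ : x1 ∈ Finset.univ) => (Finset.sum_div ..).symm,
          ← Finset.sum_div, sumPp S y0]
        field_simp
        rw [hc]
      · intro x2 j1 j2 i1 i1' i2 y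
        rw [Subsingleton.elim i1 i1']
      · intro x1 j1 j2 i1 i2 i2' y
        rcases eq_or_ne j2 i2 with h1' | h1' <;> rcases eq_or_ne j2 i2' with h2' | h2'
        · rw [← h1', ← h2']
        · have l : ∀ x2, P x1 x2 j1 j2 i1 i2 y = A x1 x2 y :=
            fun x2 => by simp only [hPdef]; rw [if_pos h1']
          have r : ∀ x2, P x1 x2 j1 j2 i1 i2' y = B x1 x2 y :=
            fun x2 => by simp only [hPdef]; rw [if_neg h2']
          rw [Finset.sum_congr rfl fun x2 _ => l x2, Finset.sum_congr rfl fun x2 _ => r x2]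
          exact eqAB x1 y
        · have l : ∀ x2, P x1 x2 j1 j2 i1 i2 y = B x1 x2 y :=
            fun x2 => by simp only [hPdef]; rw [if_neg h1']
          have r : ∀ x2, P x1 x2 j1 j2 i1 i2' y = A x1 x2 y :=
            fun x2 => by simp only [hPdef]; rw [if_pos h2']
          rw [Finset.sum_congr rfl fun x2 _ => l x2, Finset.sum_congr rfl fun x2 _ => r x2]
          exact (eqAB x1 y).symm
        · have l : ∀ x2, P x1 x2 j1 j2 i1 i2 y = B x1 x2 y :=
            fun x2 => by simp only [hPdef]; rw [if_neg h1']
          have r : ∀ x2, P x1 x2 j1 j2 i1 i2' y = B x1 x2 y :=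
            fun x2 => by simp only [hPdef]; rw [if_neg h2']
          rw [Finset.sum_congr rfl fun x2 _ => l x2, Finset.sum_congr rfl fun x2 _ => r x2]
      · intro x1 x2 i1 i2 y y'
        rw [hsumj x1 x2 i1 i2 y, hsumj x1 x2 i1 i2 y']
      · have hdiag : ∀ x1 x2 (i1 : Fin 1) (i2 : Fin k2) y,
            P x1 x2 i1 i2 i1 i2 y = S.R1 x1 x2 y / c := by
          intro x1 x2 i1 i2 y; simp [hPdef, hA]
        have hv : ∀ (i1 : Fin 1) (i2 : Fin k2),
            ∑ x1, ∑ x2, ∑ y, W x1 x2 y * P x1 x2 i1 i2 i1 i2 y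
              = (∑ x1, ∑ x2, ∑ y, W x1 x2 y * S.R1 x1 x2 y) / c := by
          intro i1 i2
          rw [Finset.sum_div]
          refine Finset.sum_congr rfl fun x1 _ => ?_
          rw [Finset.sum_div]
          refine Finset.sum_congr rfl fun x2 _ => ?_
          rw [Finset.sum_div]
          refine Finset.sum_congr rfl fun y _ => ?_
          rw [hdiag x1 x2 i1 i2 y, mul_div_assoc]
        rw [Finset.sum_congr rfl fun i1 _ => Finset.sum_congr rfl fun i2 _ => hv i1 i2]
        rw [Finset.sum_const, Finset.sum_const, Finset.card_univ, Fintype.card_fin,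
          nsmul_eq_mul, nsmul_eq_mul, Finset.card_univ, Fintype.card_fin, ← mul_assoc]
        rw [← hc, mul_div_cancel₀ _ (ne_of_gt hcpos)]
        refine Finset.sum_le_sum fun x1 _ => Finset.sum_le_sum fun x2 _ =>
          Finset.sum_le_sum fun y _ => ?_
        exact mul_le_mul_of_nonneg_left (S.hRR1 x1 x2 y) (hW0 x1 x2 y)
    · -- k1 = 1, k2 = 1
      have hk2e : k2 = 1 := le_antisymm hk2' hk2
      subst hk2e
      set P : X1 → X2 → Fin 1 → Fin 1 → Fin 1 → Fin 1 → Y → ℝ :=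
        fun x1 x2 _ _ _ _ _ => S.Pp x1 x2 / c with hPdef
      have hsumj : ∀ x1 x2 (i1 : Fin 1) (i2 : Fin 1) y,
          ∑ j1 : Fin 1, ∑ j2 : Fin 1, P x1 x2 j1 j2 i1 i2 y = S.Pp x1 x2 / c := by
        intro x1 x2 i1 i2 y
        rw [Fin.sum_univ_one, Fin.sum_univ_one]
      refine ⟨P, ⟨?_, ?_, ?_, ?_, ?_⟩, ?_⟩
      · intro x1 x2 j1 j2 i1 i2 y
        simp only [hPdef]
        apply div_nonneg _ (le_of_lt hcpos)
        linarith [S.hR0 x1 x2 y0, S.hRR1 x1 x2 y0, S.hR1P x1 x2 y0]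
      · intro i1 i2 y
        rw [Finset.sum_congr rfl fun x1 _ => Finset.sum_congr rfl fun x2 _ =>
          hsumj x1 x2 i1 i2 y]
        rw [Finset.sum_congr rfl fun x1 (_ : x1 ∈ Finset.univ) => (Finset.sum_div ..).symm,
          ← Finset.sum_div, sumPp S y0]
        field_simp
        rw [hc]
        norm_num
      · intro x2 j1 j2 i1 i1' i2 y
        rw [Subsingleton.elim i1 i1']
      · intro x1 j1 j2 i1 i2 i2' y
        rw [Subsingleton.elim i2 i2']
      · intro x1 x2 i1 i2 y y'
        rfl
      · have hv : ∀ (i1 : Fin 1) (i2 : Fin 1),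
            ∑ x1, ∑ x2, ∑ y, W x1 x2 y * P x1 x2 i1 i2 i1 i2 y
              = (∑ x1, ∑ x2, ∑ y, W x1 x2 y * S.Pp x1 x2) / c := by
          intro i1 i2
          rw [Finset.sum_div]
          refine Finset.sum_congr rfl fun x1 _ => ?_
          rw [Finset.sum_div]
          refine Finset.sum_congr rfl fun x2 _ => ?_
          rw [Finset.sum_div]
          refine Finset.sum_congr rfl fun y _ => ?_
          rw [mul_div_assoc]
        rw [Finset.sum_congr rfl fun i1 _ => Finset.sum_congr rfl fun i2 _ => hv i1 i2]
        simp only [Fin.sum_univ_one]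
        have hc1 : c = 1 := by rw [hc]; norm_num
        rw [hc1, div_one]
        refine Finset.sum_le_sum fun x1 _ => Finset.sum_le_sum fun x2 _ =>
          Finset.sum_le_sum fun y _ => ?_
        refine mul_le_mul_of_nonneg_left ?_ (hW0 x1 x2 y)
        calc S.R x1 x2 y ≤ S.R1 x1 x2 y := S.hRR1 x1 x2 y
          _ ≤ S.Pp x1 x2 := S.hR1P x1 x2 y
end BoxOfPt

section Helpers2
variable {A B C : Type*} [Fintype A] [Fintype B] [Fintype C]
lemma rotR3 (f : A → B → C → ℝ) :
    ∑ a, ∑ b, ∑ c, f a b c = ∑ c, ∑ a, ∑ b, f a b c := by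
  rw [cycL3, cycL3]
end Helpers2

section Proj
variable {X1 X2 Y : Type*} [Fintype X1] [Fintype X2] [Fintype Y]

lemma sum_prod3 (F : X1 × X2 × Y → ℝ) :
    ∑ t, F t = ∑ x1, ∑ x2, ∑ y, F (x1, x2, y) := by
  rw [Fintype.sum_prod_type]
  exact Finset.sum_congr rfl fun x1 _ => Fintype.sum_prod_type _

lemma sumY (v : Set Y) (h : X1 → X2 → Y → ℝ) :
    ∑ t ∈ Finset.univ.filter (fun t : X1 × X2 × Y => t.2.2 ∈ v), h t.1 t.2.1 t.2.2
      = ∑ y ∈ Finset.univ.filter (· ∈ v), ∑ x1, ∑ x2, h x1 x2 y := by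
  rw [Finset.sum_filter, Finset.sum_filter, sum_prod3 (fun t =>
    if t.2.2 ∈ v then h t.1 t.2.1 t.2.2 else 0)]
  rw [rotR3 (fun x1 x2 y => if y ∈ v then h x1 x2 y else 0)]
  refine Finset.sum_congr rfl fun y _ => ?_
  by_cases hy : y ∈ v <;> simp [hy]

lemma fibY (y : Y) (h : X1 → X2 → Y → ℝ) :
    ∑ t ∈ Finset.univ.filter (fun t : X1 × X2 × Y => t.2.2 = y), h t.1 t.2.1 t.2.2
      = ∑ x1, ∑ x2, h x1 x2 y := by
  rw [Finset.sum_filter, sum_prod3 (fun t =>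
    if t.2.2 = y then h t.1 t.2.1 t.2.2 else 0)]
  rw [rotR3 (fun x1 x2 y' => if y' = y then h x1 x2 y' else 0)]
  have e1 : ∀ c : Y, (∑ a : X1, ∑ b : X2, if c = y then h a b c else 0)
      = if c = y then ∑ a : X1, ∑ b : X2, h a b c else 0 := fun c => by
    by_cases hc : c = y <;> simp [hc]
  rw [Finset.sum_congr rfl fun c _ => e1 c]
  rw [Finset.sum_ite_eq' Finset.univ y (fun y' => ∑ x1, ∑ x2, h x1 x2 y')]
  simp

lemma sum2 (v : Set (X2 × Y)) (h : X1 → X2 → Y → ℝ) :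
    ∑ t ∈ Finset.univ.filter (fun t : X1 × X2 × Y => t.2 ∈ v), h t.1 t.2.1 t.2.2
      = ∑ b ∈ Finset.univ.filter (· ∈ v), ∑ x1, h x1 b.1 b.2 := by
  rw [Finset.sum_filter, Finset.sum_filter, Fintype.sum_prod_type, Finset.sum_comm]
  refine Finset.sum_congr rfl fun b _ => ?_
  by_cases hb : b ∈ v <;> simp [hb]

lemma fib2 (b : X2 × Y) (h : X1 → X2 → Y → ℝ) :
    ∑ t ∈ Finset.univ.filter (fun t : X1 × X2 × Y => t.2 = b), h t.1 t.2.1 t.2.2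
      = ∑ x1, h x1 b.1 b.2 := by
  rw [Finset.sum_filter, Fintype.sum_prod_type, Finset.sum_comm]
  have e1 : ∀ b' : X2 × Y, (∑ x1 : X1, if (x1, b').2 = b then h x1 b'.1 b'.2 else 0)
      = if b' = b then ∑ x1, h x1 b'.1 b'.2 else 0 := fun b' => by
    by_cases hb : b' = b <;> simp [hb]
  rw [Finset.sum_congr rfl fun b' _ => e1 b']
  rw [Finset.sum_ite_eq' Finset.univ b (fun b' => ∑ x1, h x1 b'.1 b'.2)]
  simp

lemma sum1 (v : Set (X1 × Y)) (h : X1 → X2 → Y → ℝ) :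
    ∑ t ∈ Finset.univ.filter (fun t : X1 × X2 × Y => (t.1, t.2.2) ∈ v), h t.1 t.2.1 t.2.2
      = ∑ b ∈ Finset.univ.filter (· ∈ v), ∑ x2, h b.1 x2 b.2 := by
  rw [Finset.sum_filter, Finset.sum_filter, sum_prod3 (fun t =>
    if (t.1, t.2.2) ∈ v then h t.1 t.2.1 t.2.2 else 0)]
  have e1 : ∀ x1 : X1, ∑ x2 : X2, ∑ y : Y, (if (x1, y) ∈ v then h x1 x2 y else 0)
      = ∑ y : Y, ∑ x2 : X2, (if (x1, y) ∈ v then h x1 x2 y else 0) :=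
    fun x1 => Finset.sum_comm
  rw [Finset.sum_congr rfl fun x1 _ => e1 x1]
  rw [Fintype.sum_prod_type (f := fun b : X1 × Y =>
    if b ∈ v then ∑ x2, h b.1 x2 b.2 else 0)]
  refine Finset.sum_congr rfl fun x1 _ => Finset.sum_congr rfl fun y _ => ?_
  by_cases hb : (x1, y) ∈ v <;> simp [hb]

lemma fib1 (b : X1 × Y) (h : X1 → X2 → Y → ℝ) :
    ∑ t ∈ Finset.univ.filter (fun t : X1 × X2 × Y => (t.1, t.2.2) = b), h t.1 t.2.1 t.2.2
      = ∑ x2, h b.1 x2 b.2 := by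
  rw [Finset.sum_filter, sum_prod3 (fun t =>
    if (t.1, t.2.2) = b then h t.1 t.2.1 t.2.2 else 0)]
  have e1 : ∀ x1 : X1, (∑ x2 : X2, ∑ y : Y, if (x1, y) = b then h x1 x2 y else 0)
      = ∑ y : Y, (if (x1, y) = b then ∑ x2, h x1 x2 y else 0) := fun x1 => by
    rw [Finset.sum_comm]
    exact Finset.sum_congr rfl fun y _ => by by_cases hb : (x1, y) = b <;> simp [hb]
  rw [Finset.sum_congr rfl fun x1 _ => e1 x1]
  rw [← Fintype.sum_prod_type (f := fun q : X1 × Y =>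
    if q = b then ∑ x2, h q.1 x2 q.2 else 0)]
  rw [Finset.sum_ite_eq' Finset.univ b (fun q => ∑ x2, h q.1 x2 q.2)]
  simp

lemma fib12 (q : X1 × X2) (h : X1 → X2 → Y → ℝ) :
    ∑ t ∈ Finset.univ.filter (fun t : X1 × X2 × Y => (t.1, t.2.1) = q), h t.1 t.2.1 t.2.2
      = ∑ y, h q.1 q.2 y := by
  rw [Finset.sum_filter, sum_prod3 (fun t =>
    if (t.1, t.2.1) = q then h t.1 t.2.1 t.2.2 else 0)]
  have : ∀ x1 x2, ∑ y, (if (x1, x2) = q then h x1 x2 y else 0)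
      = if (x1, x2) = q then ∑ y, h x1 x2 y else 0 := by
    intro x1 x2
    by_cases hq : (x1, x2) = q <;> simp [hq]
  rw [Finset.sum_congr rfl fun x1 _ => Finset.sum_congr rfl fun x2 _ => this x1 x2]
  rw [← Fintype.sum_prod_type (f := fun q' : X1 × X2 =>
    if q' = q then ∑ y, h q'.1 q'.2 y else 0)]
  rw [Finset.sum_ite_eq' Finset.univ q (fun q' => ∑ y, h q'.1 q'.2 y)]
  simp

-- versions on X1 × X2
lemma sum12x2 (v : Set X2) (h : X1 → X2 → ℝ) :
    ∑ q ∈ Finset.univ.filter (fun q : X1 × X2 => q.2 ∈ v), h q.1 q.2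
      = ∑ x2 ∈ Finset.univ.filter (· ∈ v), ∑ x1, h x1 x2 := by
  rw [Finset.sum_filter, Finset.sum_filter, Fintype.sum_prod_type, Finset.sum_comm]
  refine Finset.sum_congr rfl fun x2 _ => ?_
  by_cases hb : x2 ∈ v <;> simp [hb]

lemma sum12x1 (v : Set X1) (h : X1 → X2 → ℝ) :
    ∑ q ∈ Finset.univ.filter (fun q : X1 × X2 => q.1 ∈ v), h q.1 q.2
      = ∑ x1 ∈ Finset.univ.filter (· ∈ v), ∑ x2, h x1 x2 := by
  rw [Finset.sum_filter, Finset.sum_filter, Fintype.sum_prod_type]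
  refine Finset.sum_congr rfl fun x1 _ => ?_
  by_cases hb : x1 ∈ v <;> simp [hb]

lemma fib12x2 (x2 : X2) (h : X1 → X2 → ℝ) :
    ∑ q ∈ Finset.univ.filter (fun q : X1 × X2 => q.2 = x2), h q.1 q.2
      = ∑ x1, h x1 x2 := by
  rw [Finset.sum_filter, Fintype.sum_prod_type, Finset.sum_comm]
  have e1 : ∀ x2' : X2, (∑ x1 : X1, if (x1, x2').2 = x2 then h x1 x2' else 0)
      = if x2' = x2 then ∑ x1, h x1 x2' else 0 := fun x2' => by
    by_cases hb : x2' = x2 <;> simp [hb]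
  rw [Finset.sum_congr rfl fun x2' _ => e1 x2']
  rw [Finset.sum_ite_eq' Finset.univ x2 (fun x2' => ∑ x1, h x1 x2')]
  simp

lemma fib12x1 (x1 : X1) (h : X1 → X2 → ℝ) :
    ∑ q ∈ Finset.univ.filter (fun q : X1 × X2 => q.1 = x1), h q.1 q.2
      = ∑ x2, h x1 x2 := by
  rw [Finset.sum_filter, Fintype.sum_prod_type]
  have e1 : ∀ x1' : X1, (∑ x2' : X2, if (x1', x2').1 = x1 then h x1' x2' else 0)
      = if x1' = x1 then ∑ x2', h x1' x2' else 0 := fun x1' => by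
    by_cases hb : x1' = x1 <;> simp [hb]
  rw [Finset.sum_congr rfl fun x1' _ => e1 x1']
  rw [Finset.sum_ite_eq' Finset.univ x1 (fun x1' => ∑ x2, h x1' x2)]
  simp

lemma ncard_filter (s : Set Y) : (s.ncard : ℝ) = ((Finset.univ.filter (· ∈ s)).card : ℝ) := by
  rw [Set.ncard_eq_toFinset_card']
  congr 2
  ext t; simp

end Proj


section MainAux
variable {G : Type*} [Group G] {α : Type*} [Fintype α] [MulAction G α]

lemma sum_orbits_total (h : α → ℝ) :
    ∑ w ∈ orbF G α, ∑ t ∈ Finset.univ.filter (· ∈ w), h t = ∑ t, h t := by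
  have := sum_orbits (G := G) (fun _ : Set α => True) h
  simpa using this

end MainAux


section FiberEval
variable {G : Type*} [Group G] {α β : Type*} [Fintype α] [Fintype β]
  [MulAction G α] [MulAction G β]

lemma fiber_eval (f : α → β) (hf : ∀ (g : G) (a : α), f (g • a) = g • f a)
    (b : β) (F : Set α → ℝ) :
    ∑ t ∈ Finset.univ.filter (fun t => f t = b),
        F (MulAction.orbit G t) / ((MulAction.orbit G t).ncard : ℝ)
      = (∑ w ∈ (orbF G α).filter (fun w => f '' w = MulAction.orbit G b), F w)
          / ((MulAction.orbit G b).ncard : ℝ) := by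
  rw [← sum_orbits_point_fiber f hf b
    (fun t => F (MulAction.orbit G t) / ((MulAction.orbit G t).ncard : ℝ))
    (fun a => image_orbit _ hf a)]
  rw [Finset.sum_div]
  refine Finset.sum_congr rfl ?_
  intro w hw
  simp only [Finset.mem_filter] at hw
  obtain ⟨horb, himgw⟩ := hw
  obtain ⟨t0, rfl⟩ := mem_orbF.1 horb
  have horbb : MulAction.orbit G (f t0) = MulAction.orbit G b := by
    rw [← image_orbit f hf t0]; exact himgw
  have hb : b ∈ MulAction.orbit G (f t0) := by
    rw [horbb]; exact MulAction.mem_orbit_self b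
  have hconst : ∀ t ∈ Finset.univ.filter
      (fun t => t ∈ MulAction.orbit G t0 ∧ f t = b),
      F (MulAction.orbit G t) / ((MulAction.orbit G t).ncard : ℝ)
        = F (MulAction.orbit G t0) / ((MulAction.orbit G t0).ncard : ℝ) := by
    intro t ht
    simp only [Finset.mem_filter] at ht
    rw [MulAction.orbit_eq_iff.2 ht.2.1]
  rw [Finset.sum_congr rfl hconst, Finset.sum_const, nsmul_eq_mul]
  rw [fiber_card_real f hf t0 hb, horbb]
  have h1 : (0:ℝ) < ((MulAction.orbit G t0).ncard : ℝ) := by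
    exact_mod_cast orbit_ncard_pos t0
  have h2 : (0:ℝ) < ((MulAction.orbit G b).ncard : ℝ) := by
    exact_mod_cast orbit_ncard_pos b
  field_simp

lemma orbit_sum_const (t0 : α) (c : ℝ) :
    ∑ _t ∈ Finset.univ.filter (· ∈ MulAction.orbit G t0), c
      = ((MulAction.orbit G t0).ncard : ℝ) * c := by
  rw [Finset.sum_const, nsmul_eq_mul, orbit_toFinset_card]

end FiberEval

section WvalAux
variable {G X1 X2 Y : Type*} [Group G] [MulAction G X1] [MulAction G X2] [MulAction G Y]

lemma Wval_orbit (W : X1 → X2 → Y → ℝ)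
    (hInv : ∀ (g : G) (x1 : X1) (x2 : X2) (y : Y), W (g • x1) (g • x2) (g • y) = W x1 x2 y)
    (t0 t : X1 × X2 × Y) (ht : t ∈ MulAction.orbit G t0) :
    Wval W (MulAction.orbit G t0) = W t.1 t.2.1 t.2.2 := by
  have hne : (MulAction.orbit G t0).Nonempty := ⟨t0, MulAction.mem_orbit_self t0⟩
  have e : ∀ (g : G), W (g • t0).1 (g • t0).2.1 (g • t0).2.2 = W t0.1 t0.2.1 t0.2.2 :=
    fun g => hInv g t0.1 t0.2.1 t0.2.2
  have h1 : hne.some ∈ MulAction.orbit G t0 := hne.some_mem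
  obtain ⟨g, hg⟩ := h1
  obtain ⟨g', hg'⟩ := ht
  rw [Wval, dif_pos hne, ← hg, ← hg']
  rw [e g, e g']

end WvalAux

section DirA
variable {G X1 X2 Y : Type*} [Group G]
    [Fintype X1] [Fintype X2] [Fintype Y]
    [MulAction G X1] [MulAction G X2] [MulAction G Y]

lemma dirA (W : X1 → X2 → Y → ℝ)
    (hInv : ∀ (g : G) (x1 : X1) (x2 : X2) (y : Y),
      W (g • x1) (g • x2) (g • y) = W x1 x2 y)
    {k1 k2 : ℕ} (hk1 : 0 < k1) (hk2 : 0 < k2)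
    (P : X1 → X2 → Fin k1 → Fin k2 → Fin k1 → Fin k2 → Y → ℝ)
    (hP : IsNSBox k1 k2 P) :
    ∃ (r r1 r2 : Set (X1 × X2 × Y) → ℝ) (p : Set (X1 × X2) → ℝ),
      (∀ v : Set Y, IsOrbit G v →
        (∑ᶠ w ∈ {w : Set (X1 × X2 × Y) | IsOrbit G w ∧ (fun t => t.2.2) '' w = v}, r w)
          = (v.ncard : ℝ)) ∧
      (∀ v2 : Set (X2 × Y), IsOrbit G v2 →
        (∑ᶠ w ∈ {w : Set (X1 × X2 × Y) | IsOrbit G w ∧ Prod.snd '' w = v2}, r1 w)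
          = (k1 : ℝ) *
            ∑ᶠ w ∈ {w : Set (X1 × X2 × Y) | IsOrbit G w ∧ Prod.snd '' w = v2}, r w) ∧
      (∀ v1 : Set (X1 × Y), IsOrbit G v1 →
        (∑ᶠ w ∈ {w : Set (X1 × X2 × Y) |
            IsOrbit G w ∧ (fun t => (t.1, t.2.2)) '' w = v1}, r2 w)
          = (k2 : ℝ) *
            ∑ᶠ w ∈ {w : Set (X1 × X2 × Y) |
              IsOrbit G w ∧ (fun t => (t.1, t.2.2)) '' w = v1}, r w) ∧
      (∀ v2 : Set (X2 × Y), IsOrbit G v2 →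
        (∑ᶠ u ∈ {u : Set (X1 × X2) | IsOrbit G u ∧ Prod.snd '' u = Prod.fst '' v2}, p u)
          = ((Prod.fst '' v2).ncard : ℝ) / (v2.ncard : ℝ) * (k1 : ℝ) *
            ∑ᶠ w ∈ {w : Set (X1 × X2 × Y) | IsOrbit G w ∧ Prod.snd '' w = v2}, r2 w) ∧
      (∀ v1 : Set (X1 × Y), IsOrbit G v1 →
        (∑ᶠ u ∈ {u : Set (X1 × X2) | IsOrbit G u ∧ Prod.fst '' u = Prod.fst '' v1}, p u)
          = ((Prod.fst '' v1).ncard : ℝ) / (v1.ncard : ℝ) * (k2 : ℝ) *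
            ∑ᶠ w ∈ {w : Set (X1 × X2 × Y) |
              IsOrbit G w ∧ (fun t => (t.1, t.2.2)) '' w = v1}, r1 w) ∧
      (∀ w : Set (X1 × X2 × Y), IsOrbit G w → 0 ≤ r w) ∧
      (∀ w : Set (X1 × X2 × Y), IsOrbit G w → r w ≤ r1 w) ∧
      (∀ w : Set (X1 × X2 × Y), IsOrbit G w →
        r1 w ≤ (w.ncard : ℝ) / ((((fun t => (t.1, t.2.1)) '' w : Set (X1 × X2)).ncard : ℝ))
          * p ((fun t => (t.1, t.2.1)) '' w)) ∧
      (∀ w : Set (X1 × X2 × Y), IsOrbit G w → r w ≤ r2 w) ∧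
      (∀ w : Set (X1 × X2 × Y), IsOrbit G w →
        r2 w ≤ (w.ncard : ℝ) / ((((fun t => (t.1, t.2.1)) '' w : Set (X1 × X2)).ncard : ℝ))
          * p ((fun t => (t.1, t.2.1)) '' w)) ∧
      (∀ w : Set (X1 × X2 × Y), IsOrbit G w →
        0 ≤ (w.ncard : ℝ) / ((((fun t => (t.1, t.2.1)) '' w : Set (X1 × X2)).ncard : ℝ))
            * p ((fun t => (t.1, t.2.1)) '' w) - r1 w - r2 w + r w) ∧
      (∑ i1, ∑ i2, ∑ x1, ∑ x2, ∑ y, W x1 x2 y * P x1 x2 i1 i2 i1 i2 y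
        = ∑ᶠ w ∈ {w : Set (X1 × X2 × Y) | IsOrbit G w}, Wval W w * r w) := by
  classical
  obtain ⟨S, hSR⟩ := pt_of_box P hP hk1 hk2
  -- the projections and their equivariance
  have hfY : ∀ (g : G) (t : X1 × X2 × Y),
      (fun t : X1 × X2 × Y => t.2.2) (g • t) = g • ((fun t : X1 × X2 × Y => t.2.2) t) :=
    fun _ _ => rfl
  have hf2 : ∀ (g : G) (t : X1 × X2 × Y),
      (Prod.snd (g • t) : X2 × Y) = g • (t.2) := fun _ _ => rfl
  have hf1 : ∀ (g : G) (t : X1 × X2 × Y),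
      (fun t : X1 × X2 × Y => (t.1, t.2.2)) (g • t)
        = g • ((fun t : X1 × X2 × Y => (t.1, t.2.2)) t) := fun _ _ => rfl
  have hf12 : ∀ (g : G) (t : X1 × X2 × Y),
      (fun t : X1 × X2 × Y => (t.1, t.2.1)) (g • t)
        = g • ((fun t : X1 × X2 × Y => (t.1, t.2.1)) t) := fun _ _ => rfl
  have hg2 : ∀ (g : G) (q : X1 × X2), (Prod.snd (g • q) : X2) = g • q.2 := fun _ _ => rfl
  have hg1 : ∀ (g : G) (q : X1 × X2), (Prod.fst (g • q) : X1) = g • q.1 := fun _ _ => rfl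
  have he2 : ∀ (g : G) (b : X2 × Y), (Prod.fst (g • b) : X2) = g • b.1 := fun _ _ => rfl
  have he1 : ∀ (g : G) (b : X1 × Y), (Prod.fst (g • b) : X1) = g • b.1 := fun _ _ => rfl
  refine ⟨fun w => ∑ t ∈ Finset.univ.filter (· ∈ w), S.R t.1 t.2.1 t.2.2,
    fun w => ∑ t ∈ Finset.univ.filter (· ∈ w), S.R1 t.1 t.2.1 t.2.2,
    fun w => ∑ t ∈ Finset.univ.filter (· ∈ w), S.R2 t.1 t.2.1 t.2.2,
    fun u => ∑ q ∈ Finset.univ.filter (· ∈ u), S.Pp q.1 q.2,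
    ?_, ?_, ?_, ?_, ?_, ?_, ?_, ?_, ?_, ?_, ?_, ?_⟩
  · -- C1
    rintro v ⟨y, rfl⟩
    rw [finsum_mem_orbF (fun w => (fun t : X1 × X2 × Y => t.2.2) '' w = MulAction.orbit G y)]
    rw [sum_orbits_img (fun t : X1 × X2 × Y => t.2.2) hfY y
      (fun t => S.R t.1 t.2.1 t.2.2) (fun a => image_orbit _ hfY a)]
    rw [sumY (MulAction.orbit G y) S.R]
    rw [Finset.sum_congr rfl fun y' _ => S.hNorm y']
    rw [Finset.sum_const, nsmul_eq_mul, mul_one, ncard_filter]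
  · -- C2
    rintro v2 ⟨b, rfl⟩
    rw [finsum_mem_orbF (fun w => (Prod.snd : X1 × X2 × Y → X2 × Y) '' w = MulAction.orbit G b),
      finsum_mem_orbF (fun w => (Prod.snd : X1 × X2 × Y → X2 × Y) '' w = MulAction.orbit G b)]
    rw [sum_orbits_img (Prod.snd : X1 × X2 × Y → X2 × Y) hf2 b
      (fun t => S.R1 t.1 t.2.1 t.2.2) (fun a => image_orbit _ hf2 a)]
    rw [sum_orbits_img (Prod.snd : X1 × X2 × Y → X2 × Y) hf2 b
      (fun t => S.R t.1 t.2.1 t.2.2) (fun a => image_orbit _ hf2 a)]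
    rw [sum2 (MulAction.orbit G b) S.R1, sum2 (MulAction.orbit G b) S.R]
    rw [Finset.sum_congr rfl fun b' _ => S.hC3 b'.1 b'.2, ← Finset.mul_sum]
  · -- C3
    rintro v1 ⟨b, rfl⟩
    rw [finsum_mem_orbF
        (fun w => (fun t : X1 × X2 × Y => (t.1, t.2.2)) '' w = MulAction.orbit G b),
      finsum_mem_orbF
        (fun w => (fun t : X1 × X2 × Y => (t.1, t.2.2)) '' w = MulAction.orbit G b)]
    rw [sum_orbits_img (fun t : X1 × X2 × Y => (t.1, t.2.2)) hf1 b
      (fun t => S.R2 t.1 t.2.1 t.2.2) (fun a => image_orbit _ hf1 a)]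
    rw [sum_orbits_img (fun t : X1 × X2 × Y => (t.1, t.2.2)) hf1 b
      (fun t => S.R t.1 t.2.1 t.2.2) (fun a => image_orbit _ hf1 a)]
    rw [sum1 (MulAction.orbit G b) S.R2, sum1 (MulAction.orbit G b) S.R]
    rw [Finset.sum_congr rfl fun b' _ => S.hC4 b'.1 b'.2, ← Finset.mul_sum]
  · -- C4
    rintro v2 ⟨b, rfl⟩
    have himg : (Prod.fst : X2 × Y → X2) '' MulAction.orbit G b = MulAction.orbit G b.1 :=
      image_orbit _ he2 b
    rw [himg]
    rw [finsum_mem_orbF (fun u => (Prod.snd : X1 × X2 → X2) '' u = MulAction.orbit G b.1),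
      finsum_mem_orbF (fun w => (Prod.snd : X1 × X2 × Y → X2 × Y) '' w = MulAction.orbit G b)]
    rw [sum_orbits_img (Prod.snd : X1 × X2 → X2) hg2 b.1
      (fun q => S.Pp q.1 q.2) (fun a => image_orbit _ hg2 a)]
    rw [sum_orbits_img (Prod.snd : X1 × X2 × Y → X2 × Y) hf2 b
      (fun t => S.R2 t.1 t.2.1 t.2.2) (fun a => image_orbit _ hf2 a)]
    rw [sum12x2 (MulAction.orbit G b.1) S.Pp, sum2 (MulAction.orbit G b) S.R2]
    -- use hC5 pointwise : ∑ x1, S.R2 x1 b'.1 b'.2 = (∑ x1, S.Pp x1 b'.1) / k1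
    have hk1R : (0:ℝ) < (k1:ℝ) := by exact_mod_cast hk1
    have e5 : ∀ b' : X2 × Y, ∑ x1, S.R2 x1 b'.1 b'.2 = (∑ x1, S.Pp x1 b'.1) / (k1:ℝ) := by
      intro b'
      rw [S.hC5 b'.1 b'.2, mul_div_cancel_left₀ _ (ne_of_gt hk1R)]
    rw [Finset.sum_congr rfl fun b' _ => e5 b', ← Finset.sum_div]
    have hcomp := sum_comp_orbit (Prod.fst : X2 × Y → X2) he2 b
      (fun x2 => ∑ x1, S.Pp x1 x2)
    rw [hcomp]
    have hb1 : (0:ℝ) < ((MulAction.orbit G b.1).ncard : ℝ) := by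
      exact_mod_cast orbit_ncard_pos b.1
    have hb : (0:ℝ) < ((MulAction.orbit G b).ncard : ℝ) := by
      exact_mod_cast orbit_ncard_pos b
    field_simp
  · -- C5
    rintro v1 ⟨b, rfl⟩
    have himg : (Prod.fst : X1 × Y → X1) '' MulAction.orbit G b = MulAction.orbit G b.1 :=
      image_orbit _ he1 b
    rw [himg]
    rw [finsum_mem_orbF (fun u => (Prod.fst : X1 × X2 → X1) '' u = MulAction.orbit G b.1),
      finsum_mem_orbF
        (fun w => (fun t : X1 × X2 × Y => (t.1, t.2.2)) '' w = MulAction.orbit G b)]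
    rw [sum_orbits_img (Prod.fst : X1 × X2 → X1) hg1 b.1
      (fun q => S.Pp q.1 q.2) (fun a => image_orbit _ hg1 a)]
    rw [sum_orbits_img (fun t : X1 × X2 × Y => (t.1, t.2.2)) hf1 b
      (fun t => S.R1 t.1 t.2.1 t.2.2) (fun a => image_orbit _ hf1 a)]
    rw [sum12x1 (MulAction.orbit G b.1) S.Pp, sum1 (MulAction.orbit G b) S.R1]
    have hk2R : (0:ℝ) < (k2:ℝ) := by exact_mod_cast hk2
    have e6 : ∀ b' : X1 × Y, ∑ x2, S.R1 b'.1 x2 b'.2 = (∑ x2, S.Pp b'.1 x2) / (k2:ℝ) := by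
      intro b'
      rw [S.hC6 b'.1 b'.2, mul_div_cancel_left₀ _ (ne_of_gt hk2R)]
    rw [Finset.sum_congr rfl fun b' _ => e6 b', ← Finset.sum_div]
    have hcomp := sum_comp_orbit (Prod.fst : X1 × Y → X1) he1 b
      (fun x1 => ∑ x2, S.Pp x1 x2)
    rw [hcomp]
    have hb1 : (0:ℝ) < ((MulAction.orbit G b.1).ncard : ℝ) := by
      exact_mod_cast orbit_ncard_pos b.1
    have hb : (0:ℝ) < ((MulAction.orbit G b).ncard : ℝ) := by
      exact_mod_cast orbit_ncard_pos b
    field_simp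
  · -- I6
    rintro w ⟨t0, rfl⟩
    exact Finset.sum_nonneg fun t _ => S.hR0 t.1 t.2.1 t.2.2
  · -- I7
    rintro w ⟨t0, rfl⟩
    exact Finset.sum_le_sum fun t _ => S.hRR1 t.1 t.2.1 t.2.2
  · -- I8
    rintro w ⟨t0, rfl⟩
    rw [image_orbit (fun t : X1 × X2 × Y => (t.1, t.2.1)) hf12 t0]
    calc ∑ t ∈ Finset.univ.filter (· ∈ MulAction.orbit G t0), S.R1 t.1 t.2.1 t.2.2
        ≤ ∑ t ∈ Finset.univ.filter (· ∈ MulAction.orbit G t0),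
            (fun q : X1 × X2 => S.Pp q.1 q.2) ((fun t : X1 × X2 × Y => (t.1, t.2.1)) t) :=
          Finset.sum_le_sum fun t _ => S.hR1P t.1 t.2.1 t.2.2
      _ = _ := sum_comp_orbit (fun t : X1 × X2 × Y => (t.1, t.2.1)) hf12 t0
            (fun q => S.Pp q.1 q.2)
  · -- I9
    rintro w ⟨t0, rfl⟩
    exact Finset.sum_le_sum fun t _ => S.hRR2 t.1 t.2.1 t.2.2
  · -- I10
    rintro w ⟨t0, rfl⟩
    rw [image_orbit (fun t : X1 × X2 × Y => (t.1, t.2.1)) hf12 t0]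
    calc ∑ t ∈ Finset.univ.filter (· ∈ MulAction.orbit G t0), S.R2 t.1 t.2.1 t.2.2
        ≤ ∑ t ∈ Finset.univ.filter (· ∈ MulAction.orbit G t0),
            (fun q : X1 × X2 => S.Pp q.1 q.2) ((fun t : X1 × X2 × Y => (t.1, t.2.1)) t) :=
          Finset.sum_le_sum fun t _ => S.hR2P t.1 t.2.1 t.2.2
      _ = _ := sum_comp_orbit (fun t : X1 × X2 × Y => (t.1, t.2.1)) hf12 t0
            (fun q => S.Pp q.1 q.2)
  · -- I11
    rintro w ⟨t0, rfl⟩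
    rw [image_orbit (fun t : X1 × X2 × Y => (t.1, t.2.1)) hf12 t0]
    rw [← sum_comp_orbit (fun t : X1 × X2 × Y => (t.1, t.2.1)) hf12 t0
      (fun q => S.Pp q.1 q.2)]
    rw [← Finset.sum_sub_distrib, ← Finset.sum_sub_distrib, ← Finset.sum_add_distrib]
    exact Finset.sum_nonneg fun t _ => S.hQuad t.1 t.2.1 t.2.2
  · -- objective
    rw [finsum_mem_orbF']
    have e1 : ∀ w ∈ orbF G (X1 × X2 × Y),
        Wval W w * ∑ t ∈ Finset.univ.filter (· ∈ w), S.R t.1 t.2.1 t.2.2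
          = ∑ t ∈ Finset.univ.filter (· ∈ w), W t.1 t.2.1 t.2.2 * S.R t.1 t.2.1 t.2.2 := by
      intro w hw
      obtain ⟨t0, rfl⟩ := mem_orbF.1 hw
      rw [Finset.mul_sum]
      refine Finset.sum_congr rfl fun t ht => ?_
      simp only [Finset.mem_filter] at ht
      rw [Wval_orbit W hInv t0 t ht.2]
    rw [Finset.sum_congr rfl e1, sum_orbits_total (G := G)
      (fun t : X1 × X2 × Y => W t.1 t.2.1 t.2.2 * S.R t.1 t.2.1 t.2.2)]
    rw [sum_prod3 (fun t : X1 × X2 × Y => W t.1 t.2.1 t.2.2 * S.R t.1 t.2.1 t.2.2)]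
    have e2 : ∀ x1 x2 y, W x1 x2 y * S.R x1 x2 y
        = ∑ i1, ∑ i2, W x1 x2 y * P x1 x2 i1 i2 i1 i2 y := by
      intro x1 x2 y
      rw [hSR x1 x2 y, Finset.mul_sum]
      exact Finset.sum_congr rfl fun i1 _ => Finset.mul_sum ..
    rw [Finset.sum_congr rfl fun x1 _ => Finset.sum_congr rfl fun x2 _ =>
      Finset.sum_congr rfl fun y _ => e2 x1 x2 y]
    rw [swap23_5 (fun x1 x2 y i1 i2 => W x1 x2 y * P x1 x2 i1 i2 i1 i2 y)]

end DirA


section DirB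
variable {G X1 X2 Y : Type*} [Group G]
    [Fintype X1] [Fintype X2] [Fintype Y]
    [MulAction G X1] [MulAction G X2] [MulAction G Y]

lemma dirB (W : X1 → X2 → Y → ℝ) (hW0 : ∀ x1 x2 y, 0 ≤ W x1 x2 y)
    (hInv : ∀ (g : G) (x1 : X1) (x2 : X2) (y : Y),
      W (g • x1) (g • x2) (g • y) = W x1 x2 y)
    {k1 k2 : ℕ} (hk1 : 0 < k1) (hk2 : 0 < k2)
    (r r1 r2 : Set (X1 × X2 × Y) → ℝ) (p : Set (X1 × X2) → ℝ)
    (h1 : ∀ v : Set Y, IsOrbit G v →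
        (∑ᶠ w ∈ {w : Set (X1 × X2 × Y) | IsOrbit G w ∧ (fun t => t.2.2) '' w = v}, r w)
          = (v.ncard : ℝ))
    (h2 : ∀ v2 : Set (X2 × Y), IsOrbit G v2 →
        (∑ᶠ w ∈ {w : Set (X1 × X2 × Y) | IsOrbit G w ∧ Prod.snd '' w = v2}, r1 w)
          = (k1 : ℝ) *
            ∑ᶠ w ∈ {w : Set (X1 × X2 × Y) | IsOrbit G w ∧ Prod.snd '' w = v2}, r w)
    (h3 : ∀ v1 : Set (X1 × Y), IsOrbit G v1 →
        (∑ᶠ w ∈ {w : Set (X1 × X2 × Y) |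
            IsOrbit G w ∧ (fun t => (t.1, t.2.2)) '' w = v1}, r2 w)
          = (k2 : ℝ) *
            ∑ᶠ w ∈ {w : Set (X1 × X2 × Y) |
              IsOrbit G w ∧ (fun t => (t.1, t.2.2)) '' w = v1}, r w)
    (h4 : ∀ v2 : Set (X2 × Y), IsOrbit G v2 →
        (∑ᶠ u ∈ {u : Set (X1 × X2) | IsOrbit G u ∧ Prod.snd '' u = Prod.fst '' v2}, p u)
          = ((Prod.fst '' v2).ncard : ℝ) / (v2.ncard : ℝ) * (k1 : ℝ) *
            ∑ᶠ w ∈ {w : Set (X1 × X2 × Y) | IsOrbit G w ∧ Prod.snd '' w = v2}, r2 w)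
    (h5 : ∀ v1 : Set (X1 × Y), IsOrbit G v1 →
        (∑ᶠ u ∈ {u : Set (X1 × X2) | IsOrbit G u ∧ Prod.fst '' u = Prod.fst '' v1}, p u)
          = ((Prod.fst '' v1).ncard : ℝ) / (v1.ncard : ℝ) * (k2 : ℝ) *
            ∑ᶠ w ∈ {w : Set (X1 × X2 × Y) |
              IsOrbit G w ∧ (fun t => (t.1, t.2.2)) '' w = v1}, r1 w)
    (h6 : ∀ w : Set (X1 × X2 × Y), IsOrbit G w → 0 ≤ r w)
    (h7 : ∀ w : Set (X1 × X2 × Y), IsOrbit G w → r w ≤ r1 w)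
    (h8 : ∀ w : Set (X1 × X2 × Y), IsOrbit G w →
        r1 w ≤ (w.ncard : ℝ) / ((((fun t => (t.1, t.2.1)) '' w : Set (X1 × X2)).ncard : ℝ))
          * p ((fun t => (t.1, t.2.1)) '' w))
    (h9 : ∀ w : Set (X1 × X2 × Y), IsOrbit G w → r w ≤ r2 w)
    (h10 : ∀ w : Set (X1 × X2 × Y), IsOrbit G w →
        r2 w ≤ (w.ncard : ℝ) / ((((fun t => (t.1, t.2.1)) '' w : Set (X1 × X2)).ncard : ℝ))
          * p ((fun t => (t.1, t.2.1)) '' w))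
    (h11 : ∀ w : Set (X1 × X2 × Y), IsOrbit G w →
        0 ≤ (w.ncard : ℝ) / ((((fun t => (t.1, t.2.1)) '' w : Set (X1 × X2)).ncard : ℝ))
            * p ((fun t => (t.1, t.2.1)) '' w) - r1 w - r2 w + r w) :
    ∃ P : X1 → X2 → Fin k1 → Fin k2 → Fin k1 → Fin k2 → Y → ℝ,
      IsNSBox k1 k2 P ∧
      (∑ᶠ w ∈ {w : Set (X1 × X2 × Y) | IsOrbit G w}, Wval W w * r w)
        ≤ ∑ i1, ∑ i2, ∑ x1, ∑ x2, ∑ y, W x1 x2 y * P x1 x2 i1 i2 i1 i2 y := by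
  classical
  have hfY : ∀ (g : G) (t : X1 × X2 × Y),
      (fun t : X1 × X2 × Y => t.2.2) (g • t) = g • ((fun t : X1 × X2 × Y => t.2.2) t) :=
    fun _ _ => rfl
  have hf2 : ∀ (g : G) (t : X1 × X2 × Y),
      (Prod.snd (g • t) : X2 × Y) = g • (t.2) := fun _ _ => rfl
  have hf1 : ∀ (g : G) (t : X1 × X2 × Y),
      (fun t : X1 × X2 × Y => (t.1, t.2.2)) (g • t)
        = g • ((fun t : X1 × X2 × Y => (t.1, t.2.2)) t) := fun _ _ => rfl
  have hf12 : ∀ (g : G) (t : X1 × X2 × Y),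
      (fun t : X1 × X2 × Y => (t.1, t.2.1)) (g • t)
        = g • ((fun t : X1 × X2 × Y => (t.1, t.2.1)) t) := fun _ _ => rfl
  have hg2 : ∀ (g : G) (q : X1 × X2), (Prod.snd (g • q) : X2) = g • q.2 := fun _ _ => rfl
  have hg1 : ∀ (g : G) (q : X1 × X2), (Prod.fst (g • q) : X1) = g • q.1 := fun _ _ => rfl
  have he2 : ∀ (g : G) (b : X2 × Y), (Prod.fst (g • b) : X2) = g • b.1 := fun _ _ => rfl
  have he1 : ∀ (g : G) (b : X1 × Y), (Prod.fst (g • b) : X1) = g • b.1 := fun _ _ => rfl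
  have hk1R : (0:ℝ) < (k1:ℝ) := by exact_mod_cast hk1
  have hk2R : (0:ℝ) < (k2:ℝ) := by exact_mod_cast hk2
  -- positive cardinalities
  have hposT : ∀ t : X1 × X2 × Y, (0:ℝ) < ((MulAction.orbit G t).ncard : ℝ) := by
    intro t; exact_mod_cast orbit_ncard_pos t
  have hposQ : ∀ q : X1 × X2, (0:ℝ) < ((MulAction.orbit G q).ncard : ℝ) := by
    intro q; exact_mod_cast orbit_ncard_pos q
  have hposY : ∀ y : Y, (0:ℝ) < ((MulAction.orbit G y).ncard : ℝ) := by
    intro y; exact_mod_cast orbit_ncard_pos y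
  have hpos2 : ∀ b : X2 × Y, (0:ℝ) < ((MulAction.orbit G b).ncard : ℝ) := by
    intro b; exact_mod_cast orbit_ncard_pos b
  have hpos1 : ∀ b : X1 × Y, (0:ℝ) < ((MulAction.orbit G b).ncard : ℝ) := by
    intro b; exact_mod_cast orbit_ncard_pos b
  have hposX2 : ∀ x2 : X2, (0:ℝ) < ((MulAction.orbit G x2).ncard : ℝ) := by
    intro x2; exact_mod_cast orbit_ncard_pos x2
  have hposX1 : ∀ x1 : X1, (0:ℝ) < ((MulAction.orbit G x1).ncard : ℝ) := by
    intro x1; exact_mod_cast orbit_ncard_pos x1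
  -- converted hypotheses
  have hC1' : ∀ y : Y,
      ∑ w ∈ (orbF G (X1 × X2 × Y)).filter
        (fun w => (fun t : X1 × X2 × Y => t.2.2) '' w = MulAction.orbit G y), r w
        = ((MulAction.orbit G y).ncard : ℝ) := by
    intro y
    rw [← finsum_mem_orbF]
    exact h1 _ ⟨y, rfl⟩
  have hC2' : ∀ b : X2 × Y,
      ∑ w ∈ (orbF G (X1 × X2 × Y)).filter
        (fun w => (Prod.snd : X1 × X2 × Y → X2 × Y) '' w = MulAction.orbit G b), r1 w
        = (k1:ℝ) * ∑ w ∈ (orbF G (X1 × X2 × Y)).filter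
          (fun w => (Prod.snd : X1 × X2 × Y → X2 × Y) '' w = MulAction.orbit G b), r w := by
    intro b
    rw [← finsum_mem_orbF, ← finsum_mem_orbF]
    exact h2 _ ⟨b, rfl⟩
  have hC3' : ∀ b : X1 × Y,
      ∑ w ∈ (orbF G (X1 × X2 × Y)).filter
        (fun w => (fun t : X1 × X2 × Y => (t.1, t.2.2)) '' w = MulAction.orbit G b), r2 w
        = (k2:ℝ) * ∑ w ∈ (orbF G (X1 × X2 × Y)).filter
          (fun w => (fun t : X1 × X2 × Y => (t.1, t.2.2)) '' w = MulAction.orbit G b), r w := by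
    intro b
    rw [← finsum_mem_orbF, ← finsum_mem_orbF]
    exact h3 _ ⟨b, rfl⟩
  have hC4' : ∀ b : X2 × Y,
      ∑ u ∈ (orbF G (X1 × X2)).filter
        (fun u => (Prod.snd : X1 × X2 → X2) '' u = MulAction.orbit G b.1), p u
        = ((MulAction.orbit G b.1).ncard : ℝ) / ((MulAction.orbit G b).ncard : ℝ) * (k1:ℝ) *
          ∑ w ∈ (orbF G (X1 × X2 × Y)).filter
            (fun w => (Prod.snd : X1 × X2 × Y → X2 × Y) '' w = MulAction.orbit G b), r2 w := by
    intro b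
    have := h4 _ ⟨b, rfl⟩
    rw [image_orbit (Prod.fst : X2 × Y → X2) he2 b] at this
    rw [← finsum_mem_orbF, ← finsum_mem_orbF]
    exact this
  have hC5' : ∀ b : X1 × Y,
      ∑ u ∈ (orbF G (X1 × X2)).filter
        (fun u => (Prod.fst : X1 × X2 → X1) '' u = MulAction.orbit G b.1), p u
        = ((MulAction.orbit G b.1).ncard : ℝ) / ((MulAction.orbit G b).ncard : ℝ) * (k2:ℝ) *
          ∑ w ∈ (orbF G (X1 × X2 × Y)).filter
            (fun w => (fun t : X1 × X2 × Y => (t.1, t.2.2)) '' w = MulAction.orbit G b),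
            r1 w := by
    intro b
    have := h5 _ ⟨b, rfl⟩
    rw [image_orbit (Prod.fst : X1 × Y → X1) he1 b] at this
    rw [← finsum_mem_orbF, ← finsum_mem_orbF]
    exact this
  -- pointwise inequality facts
  have hI8 : ∀ t : X1 × X2 × Y,
      r1 (MulAction.orbit G t) ≤ ((MulAction.orbit G t).ncard : ℝ)
        / ((MulAction.orbit G (t.1, t.2.1)).ncard : ℝ) * p (MulAction.orbit G (t.1, t.2.1)) := by
    intro t
    have := h8 _ ⟨t, rfl⟩
    rwa [image_orbit (fun t : X1 × X2 × Y => (t.1, t.2.1)) hf12 t] at this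
  have hI10 : ∀ t : X1 × X2 × Y,
      r2 (MulAction.orbit G t) ≤ ((MulAction.orbit G t).ncard : ℝ)
        / ((MulAction.orbit G (t.1, t.2.1)).ncard : ℝ) * p (MulAction.orbit G (t.1, t.2.1)) := by
    intro t
    have := h10 _ ⟨t, rfl⟩
    rwa [image_orbit (fun t : X1 × X2 × Y => (t.1, t.2.1)) hf12 t] at this
  have hI11 : ∀ t : X1 × X2 × Y,
      0 ≤ ((MulAction.orbit G t).ncard : ℝ)
        / ((MulAction.orbit G (t.1, t.2.1)).ncard : ℝ) * p (MulAction.orbit G (t.1, t.2.1))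
        - r1 (MulAction.orbit G t) - r2 (MulAction.orbit G t) + r (MulAction.orbit G t) := by
    intro t
    have := h11 _ ⟨t, rfl⟩
    rwa [image_orbit (fun t : X1 × X2 × Y => (t.1, t.2.1)) hf12 t] at this
  -- the pointwise solution
  set R : X1 → X2 → Y → ℝ := fun x1 x2 y =>
    r (MulAction.orbit G (x1, x2, y)) / ((MulAction.orbit G (x1, x2, y)).ncard : ℝ) with hR
  set R1 : X1 → X2 → Y → ℝ := fun x1 x2 y =>
    r1 (MulAction.orbit G (x1, x2, y)) / ((MulAction.orbit G (x1, x2, y)).ncard : ℝ) with hR1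
  set R2 : X1 → X2 → Y → ℝ := fun x1 x2 y =>
    r2 (MulAction.orbit G (x1, x2, y)) / ((MulAction.orbit G (x1, x2, y)).ncard : ℝ) with hR2f
  set Pp : X1 → X2 → ℝ := fun x1 x2 =>
    p (MulAction.orbit G (x1, x2)) / ((MulAction.orbit G (x1, x2)).ncard : ℝ) with hPp
  -- fiber evaluation identities
  have hRfib : ∀ y : Y, ∑ x1, ∑ x2, R x1 x2 y
      = (∑ w ∈ (orbF G (X1 × X2 × Y)).filter
          (fun w => (fun t : X1 × X2 × Y => t.2.2) '' w = MulAction.orbit G y), r w)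
        / ((MulAction.orbit G y).ncard : ℝ) := by
    intro y
    rw [← fibY y R]
    rw [Finset.sum_congr rfl (fun t _ => (rfl :
      R t.1 t.2.1 t.2.2 = r (MulAction.orbit G t) / ((MulAction.orbit G t).ncard : ℝ)))]
    have hfe := fiber_eval (fun t : X1 × X2 × Y => t.2.2) hfY y r
    refine Eq.trans ?_ hfe
    exact Finset.sum_congr (by ext t; simp [Finset.mem_filter]) (fun t _ => rfl)
  have hR1fib2 : ∀ b : X2 × Y, ∑ x1, R1 x1 b.1 b.2
      = (∑ w ∈ (orbF G (X1 × X2 × Y)).filter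
          (fun w => (Prod.snd : X1 × X2 × Y → X2 × Y) '' w = MulAction.orbit G b), r1 w)
        / ((MulAction.orbit G b).ncard : ℝ) := by
    intro b
    rw [← fib2 b R1]
    rw [Finset.sum_congr rfl (fun t _ => (rfl :
      R1 t.1 t.2.1 t.2.2 = r1 (MulAction.orbit G t) / ((MulAction.orbit G t).ncard : ℝ)))]
    have hfe := fiber_eval (Prod.snd : X1 × X2 × Y → X2 × Y) hf2 b r1
    refine Eq.trans ?_ hfe
    exact Finset.sum_congr (by ext t; simp [Finset.mem_filter]) (fun t _ => rfl)
  have hRfib2 : ∀ b : X2 × Y, ∑ x1, R x1 b.1 b.2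
      = (∑ w ∈ (orbF G (X1 × X2 × Y)).filter
          (fun w => (Prod.snd : X1 × X2 × Y → X2 × Y) '' w = MulAction.orbit G b), r w)
        / ((MulAction.orbit G b).ncard : ℝ) := by
    intro b
    rw [← fib2 b R]
    rw [Finset.sum_congr rfl (fun t _ => (rfl :
      R t.1 t.2.1 t.2.2 = r (MulAction.orbit G t) / ((MulAction.orbit G t).ncard : ℝ)))]
    have hfe := fiber_eval (Prod.snd : X1 × X2 × Y → X2 × Y) hf2 b r
    refine Eq.trans ?_ hfe
    exact Finset.sum_congr (by ext t; simp [Finset.mem_filter]) (fun t _ => rfl)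
  have hR2fib2 : ∀ b : X2 × Y, ∑ x1, R2 x1 b.1 b.2
      = (∑ w ∈ (orbF G (X1 × X2 × Y)).filter
          (fun w => (Prod.snd : X1 × X2 × Y → X2 × Y) '' w = MulAction.orbit G b), r2 w)
        / ((MulAction.orbit G b).ncard : ℝ) := by
    intro b
    rw [← fib2 b R2]
    rw [Finset.sum_congr rfl (fun t _ => (rfl :
      R2 t.1 t.2.1 t.2.2 = r2 (MulAction.orbit G t) / ((MulAction.orbit G t).ncard : ℝ)))]
    have hfe := fiber_eval (Prod.snd : X1 × X2 × Y → X2 × Y) hf2 b r2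
    refine Eq.trans ?_ hfe
    exact Finset.sum_congr (by ext t; simp [Finset.mem_filter]) (fun t _ => rfl)
  have hR2fib1 : ∀ b : X1 × Y, ∑ x2, R2 b.1 x2 b.2
      = (∑ w ∈ (orbF G (X1 × X2 × Y)).filter
          (fun w => (fun t : X1 × X2 × Y => (t.1, t.2.2)) '' w = MulAction.orbit G b), r2 w)
        / ((MulAction.orbit G b).ncard : ℝ) := by
    intro b
    rw [← fib1 b R2]
    rw [Finset.sum_congr rfl (fun t _ => (rfl :
      R2 t.1 t.2.1 t.2.2 = r2 (MulAction.orbit G t) / ((MulAction.orbit G t).ncard : ℝ)))]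
    have hfe := fiber_eval (fun t : X1 × X2 × Y => (t.1, t.2.2)) hf1 b r2
    refine Eq.trans ?_ hfe
    exact Finset.sum_congr (by ext t; simp [Finset.mem_filter]) (fun t _ => rfl)
  have hRfib1 : ∀ b : X1 × Y, ∑ x2, R b.1 x2 b.2
      = (∑ w ∈ (orbF G (X1 × X2 × Y)).filter
          (fun w => (fun t : X1 × X2 × Y => (t.1, t.2.2)) '' w = MulAction.orbit G b), r w)
        / ((MulAction.orbit G b).ncard : ℝ) := by
    intro b
    rw [← fib1 b R]
    rw [Finset.sum_congr rfl (fun t _ => (rfl :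
      R t.1 t.2.1 t.2.2 = r (MulAction.orbit G t) / ((MulAction.orbit G t).ncard : ℝ)))]
    have hfe := fiber_eval (fun t : X1 × X2 × Y => (t.1, t.2.2)) hf1 b r
    refine Eq.trans ?_ hfe
    exact Finset.sum_congr (by ext t; simp [Finset.mem_filter]) (fun t _ => rfl)
  have hR1fib1 : ∀ b : X1 × Y, ∑ x2, R1 b.1 x2 b.2
      = (∑ w ∈ (orbF G (X1 × X2 × Y)).filter
          (fun w => (fun t : X1 × X2 × Y => (t.1, t.2.2)) '' w = MulAction.orbit G b), r1 w)
        / ((MulAction.orbit G b).ncard : ℝ) := by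
    intro b
    rw [← fib1 b R1]
    rw [Finset.sum_congr rfl (fun t _ => (rfl :
      R1 t.1 t.2.1 t.2.2 = r1 (MulAction.orbit G t) / ((MulAction.orbit G t).ncard : ℝ)))]
    have hfe := fiber_eval (fun t : X1 × X2 × Y => (t.1, t.2.2)) hf1 b r1
    refine Eq.trans ?_ hfe
    exact Finset.sum_congr (by ext t; simp [Finset.mem_filter]) (fun t _ => rfl)
  have hPpfib2 : ∀ x2 : X2, ∑ x1, Pp x1 x2
      = (∑ u ∈ (orbF G (X1 × X2)).filter
          (fun u => (Prod.snd : X1 × X2 → X2) '' u = MulAction.orbit G x2), p u)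
        / ((MulAction.orbit G x2).ncard : ℝ) := by
    intro x2
    rw [← fib12x2 x2 Pp]
    rw [Finset.sum_congr rfl (fun q _ => (rfl :
      Pp q.1 q.2 = p (MulAction.orbit G q) / ((MulAction.orbit G q).ncard : ℝ)))]
    have hfe := fiber_eval (Prod.snd : X1 × X2 → X2) hg2 x2 p
    refine Eq.trans ?_ hfe
    exact Finset.sum_congr (by ext t; simp [Finset.mem_filter]) (fun t _ => rfl)
  have hPpfib1 : ∀ x1 : X1, ∑ x2, Pp x1 x2
      = (∑ u ∈ (orbF G (X1 × X2)).filter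
          (fun u => (Prod.fst : X1 × X2 → X1) '' u = MulAction.orbit G x1), p u)
        / ((MulAction.orbit G x1).ncard : ℝ) := by
    intro x1
    rw [← fib12x1 x1 Pp]
    rw [Finset.sum_congr rfl (fun q _ => (rfl :
      Pp q.1 q.2 = p (MulAction.orbit G q) / ((MulAction.orbit G q).ncard : ℝ)))]
    have hfe := fiber_eval (Prod.fst : X1 × X2 → X1) hg1 x1 p
    refine Eq.trans ?_ hfe
    exact Finset.sum_congr (by ext t; simp [Finset.mem_filter]) (fun t _ => rfl)
  -- component versions of instantiated constraints (definitional eta)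
  have hC4'' : ∀ (x2 : X2) (y : Y),
      ∑ u ∈ (orbF G (X1 × X2)).filter
        (fun u => (Prod.snd : X1 × X2 → X2) '' u = MulAction.orbit G x2), p u
        = ((MulAction.orbit G x2).ncard : ℝ) / ((MulAction.orbit G (x2, y)).ncard : ℝ)
          * (k1:ℝ) *
          ∑ w ∈ (orbF G (X1 × X2 × Y)).filter
            (fun w => (Prod.snd : X1 × X2 × Y → X2 × Y) '' w = MulAction.orbit G (x2, y)),
            r2 w :=
    fun x2 y => hC4' (x2, y)
  have hC5'' : ∀ (x1 : X1) (y : Y),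
      ∑ u ∈ (orbF G (X1 × X2)).filter
        (fun u => (Prod.fst : X1 × X2 → X1) '' u = MulAction.orbit G x1), p u
        = ((MulAction.orbit G x1).ncard : ℝ) / ((MulAction.orbit G (x1, y)).ncard : ℝ)
          * (k2:ℝ) *
          ∑ w ∈ (orbF G (X1 × X2 × Y)).filter
            (fun w => (fun t : X1 × X2 × Y => (t.1, t.2.2)) '' w
              = MulAction.orbit G (x1, y)), r1 w :=
    fun x1 y => hC5' (x1, y)
  have hR1fib2' : ∀ (x2 : X2) (y : Y), ∑ x1, R1 x1 x2 y
      = (∑ w ∈ (orbF G (X1 × X2 × Y)).filter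
          (fun w => (Prod.snd : X1 × X2 × Y → X2 × Y) '' w = MulAction.orbit G (x2, y)), r1 w)
        / ((MulAction.orbit G (x2, y)).ncard : ℝ) := fun x2 y => hR1fib2 (x2, y)
  have hRfib2' : ∀ (x2 : X2) (y : Y), ∑ x1, R x1 x2 y
      = (∑ w ∈ (orbF G (X1 × X2 × Y)).filter
          (fun w => (Prod.snd : X1 × X2 × Y → X2 × Y) '' w = MulAction.orbit G (x2, y)), r w)
        / ((MulAction.orbit G (x2, y)).ncard : ℝ) := fun x2 y => hRfib2 (x2, y)
  have hR2fib2' : ∀ (x2 : X2) (y : Y), ∑ x1, R2 x1 x2 y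
      = (∑ w ∈ (orbF G (X1 × X2 × Y)).filter
          (fun w => (Prod.snd : X1 × X2 × Y → X2 × Y) '' w = MulAction.orbit G (x2, y)), r2 w)
        / ((MulAction.orbit G (x2, y)).ncard : ℝ) := fun x2 y => hR2fib2 (x2, y)
  have hR2fib1' : ∀ (x1 : X1) (y : Y), ∑ x2, R2 x1 x2 y
      = (∑ w ∈ (orbF G (X1 × X2 × Y)).filter
          (fun w => (fun t : X1 × X2 × Y => (t.1, t.2.2)) '' w = MulAction.orbit G (x1, y)),
          r2 w)
        / ((MulAction.orbit G (x1, y)).ncard : ℝ) := fun x1 y => hR2fib1 (x1, y)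
  have hRfib1' : ∀ (x1 : X1) (y : Y), ∑ x2, R x1 x2 y
      = (∑ w ∈ (orbF G (X1 × X2 × Y)).filter
          (fun w => (fun t : X1 × X2 × Y => (t.1, t.2.2)) '' w = MulAction.orbit G (x1, y)),
          r w)
        / ((MulAction.orbit G (x1, y)).ncard : ℝ) := fun x1 y => hRfib1 (x1, y)
  have hR1fib1' : ∀ (x1 : X1) (y : Y), ∑ x2, R1 x1 x2 y
      = (∑ w ∈ (orbF G (X1 × X2 × Y)).filter
          (fun w => (fun t : X1 × X2 × Y => (t.1, t.2.2)) '' w = MulAction.orbit G (x1, y)),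
          r1 w)
        / ((MulAction.orbit G (x1, y)).ncard : ℝ) := fun x1 y => hR1fib1 (x1, y)
  -- pointwise nonnegativity / inequalities
  let hS : PtSol X1 X2 Y k1 k2 := {
    R := R, R1 := R1, R2 := R2, Pp := Pp
    hR0 := by
      intro x1 x2 y
      exact div_nonneg (h6 _ ⟨(x1, x2, y), rfl⟩) (le_of_lt (hposT (x1, x2, y)))
    hRR1 := by
      intro x1 x2 y
      have hw := hposT (x1, x2, y)
      simp only [hR, hR1]
      rw [div_le_div_iff₀ hw hw]
      exact mul_le_mul_of_nonneg_right (h7 _ ⟨(x1, x2, y), rfl⟩) (le_of_lt hw)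
    hRR2 := by
      intro x1 x2 y
      have hw := hposT (x1, x2, y)
      simp only [hR, hR2f]
      rw [div_le_div_iff₀ hw hw]
      exact mul_le_mul_of_nonneg_right (h9 _ ⟨(x1, x2, y), rfl⟩) (le_of_lt hw)
    hR1P := by
      intro x1 x2 y
      have hw := hposT (x1, x2, y)
      have hu := hposQ (x1, x2)
      have h8' : r1 (MulAction.orbit G (x1, x2, y))
          ≤ ((MulAction.orbit G (x1, x2, y)).ncard : ℝ)
            / ((MulAction.orbit G (x1, x2)).ncard : ℝ) * p (MulAction.orbit G (x1, x2)) :=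
        hI8 (x1, x2, y)
      simp only [hR1, hPp]
      rw [div_le_div_iff₀ hw hu]
      calc r1 (MulAction.orbit G (x1, x2, y)) * ((MulAction.orbit G (x1, x2)).ncard : ℝ)
          ≤ (((MulAction.orbit G (x1, x2, y)).ncard : ℝ)
              / ((MulAction.orbit G (x1, x2)).ncard : ℝ) * p (MulAction.orbit G (x1, x2)))
              * ((MulAction.orbit G (x1, x2)).ncard : ℝ) :=
            mul_le_mul_of_nonneg_right h8' (le_of_lt hu)
        _ = p (MulAction.orbit G (x1, x2)) * ((MulAction.orbit G (x1, x2, y)).ncard : ℝ) := by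
            field_simp
    hR2P := by
      intro x1 x2 y
      have hw := hposT (x1, x2, y)
      have hu := hposQ (x1, x2)
      have h10' : r2 (MulAction.orbit G (x1, x2, y))
          ≤ ((MulAction.orbit G (x1, x2, y)).ncard : ℝ)
            / ((MulAction.orbit G (x1, x2)).ncard : ℝ) * p (MulAction.orbit G (x1, x2)) :=
        hI10 (x1, x2, y)
      simp only [hR2f, hPp]
      rw [div_le_div_iff₀ hw hu]
      calc r2 (MulAction.orbit G (x1, x2, y)) * ((MulAction.orbit G (x1, x2)).ncard : ℝ)
          ≤ (((MulAction.orbit G (x1, x2, y)).ncard : ℝ)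
              / ((MulAction.orbit G (x1, x2)).ncard : ℝ) * p (MulAction.orbit G (x1, x2)))
              * ((MulAction.orbit G (x1, x2)).ncard : ℝ) :=
            mul_le_mul_of_nonneg_right h10' (le_of_lt hu)
        _ = p (MulAction.orbit G (x1, x2)) * ((MulAction.orbit G (x1, x2, y)).ncard : ℝ) := by
            field_simp
    hQuad := by
      intro x1 x2 y
      have hw := hposT (x1, x2, y)
      have hu := hposQ (x1, x2)
      have h11' : 0 ≤ ((MulAction.orbit G (x1, x2, y)).ncard : ℝ)
            / ((MulAction.orbit G (x1, x2)).ncard : ℝ) * p (MulAction.orbit G (x1, x2))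
            - r1 (MulAction.orbit G (x1, x2, y)) - r2 (MulAction.orbit G (x1, x2, y))
            + r (MulAction.orbit G (x1, x2, y)) := hI11 (x1, x2, y)
      simp only [hR, hR1, hR2f, hPp]
      have e : p (MulAction.orbit G (x1, x2)) / ((MulAction.orbit G (x1, x2)).ncard : ℝ)
          - r1 (MulAction.orbit G (x1, x2, y)) / ((MulAction.orbit G (x1, x2, y)).ncard : ℝ)
          - r2 (MulAction.orbit G (x1, x2, y)) / ((MulAction.orbit G (x1, x2, y)).ncard : ℝ)
          + r (MulAction.orbit G (x1, x2, y)) / ((MulAction.orbit G (x1, x2, y)).ncard : ℝ)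
          = (((MulAction.orbit G (x1, x2, y)).ncard : ℝ)
              / ((MulAction.orbit G (x1, x2)).ncard : ℝ) * p (MulAction.orbit G (x1, x2))
              - r1 (MulAction.orbit G (x1, x2, y)) - r2 (MulAction.orbit G (x1, x2, y))
              + r (MulAction.orbit G (x1, x2, y)))
            / ((MulAction.orbit G (x1, x2, y)).ncard : ℝ) := by
        field_simp
      rw [e]
      exact div_nonneg h11' (le_of_lt hw)
    hNorm := by
      intro y
      rw [hRfib y, hC1' y]
      exact div_self (ne_of_gt (hposY y))
    hC3 := by
      intro x2 y
      rw [hR1fib2' x2 y, hRfib2' x2 y, hC2' (x2, y)]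
      ring
    hC4 := by
      intro x1 y
      rw [hR2fib1' x1 y, hRfib1' x1 y, hC3' (x1, y)]
      ring
    hC5 := by
      intro x2 y
      rw [hPpfib2 x2, hR2fib2' x2 y, hC4'' x2 y]
      have ha := hposX2 x2
      have hb := hpos2 (x2, y)
      field_simp
    hC6 := by
      intro x1 y
      rw [hPpfib1 x1, hR1fib1' x1 y, hC5'' x1 y]
      have ha := hposX1 x1
      have hb := hpos1 (x1, y)
      field_simp }
  obtain ⟨P, hbox, hle⟩ := box_of_pt W hW0 hS hk1 hk2
  refine ⟨P, hbox, ?_⟩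
  rw [finsum_mem_orbF']
  have e1 : ∀ w ∈ orbF G (X1 × X2 × Y), Wval W w * r w
      = ∑ t ∈ Finset.univ.filter (· ∈ w), W t.1 t.2.1 t.2.2 * R t.1 t.2.1 t.2.2 := by
    intro w hw
    obtain ⟨t0, rfl⟩ := mem_orbF.1 hw
    have hrw : r (MulAction.orbit G t0)
        = ∑ t ∈ Finset.univ.filter (· ∈ MulAction.orbit G t0), R t.1 t.2.1 t.2.2 := by
      have hconst : ∀ t ∈ Finset.univ.filter (· ∈ MulAction.orbit G t0),
          R t.1 t.2.1 t.2.2 = r (MulAction.orbit G t0)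
            / ((MulAction.orbit G t0).ncard : ℝ) := by
        intro t ht
        simp only [Finset.mem_filter] at ht
        have horb : MulAction.orbit G (t.1, t.2.1, t.2.2) = MulAction.orbit G t0 :=
          MulAction.orbit_eq_iff.2 ht.2
        simp only [hR]
        rw [horb]
      rw [Finset.sum_congr rfl hconst, orbit_sum_const]
      have := hposT t0
      field_simp
    rw [hrw, Finset.mul_sum]
    refine Finset.sum_congr rfl fun t ht => ?_
    simp only [Finset.mem_filter] at ht
    rw [Wval_orbit W hInv t0 t ht.2]
  rw [Finset.sum_congr rfl e1, sum_orbits_total (G := G)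
    (fun t : X1 × X2 × Y => W t.1 t.2.1 t.2.2 * R t.1 t.2.1 t.2.2)]
  rw [sum_prod3 (fun t : X1 × X2 × Y => W t.1 t.2.1 t.2.2 * R t.1 t.2.1 t.2.2)]
  exact hle
end DirB


section FinalAux
variable {X1 X2 Y : Type*} [Fintype X1] [Fintype X2] [Fintype Y]

/-- Any non-signaling box value is at most `|Y|`. -/
lemma box_bound {k1 k2 : ℕ} (hk1 : 0 < k1) (hk2 : 0 < k2)
    (W : X1 → X2 → Y → ℝ) (hW0 : ∀ x1 x2 y, 0 ≤ W x1 x2 y)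
    (hW1 : ∀ x1 x2, ∑ y, W x1 x2 y = 1)
    (P : X1 → X2 → Fin k1 → Fin k2 → Fin k1 → Fin k2 → Y → ℝ)
    (hP : IsNSBox k1 k2 P) :
    (1 / ((k1 : ℝ) * (k2 : ℝ))) * ∑ i1, ∑ i2, ∑ x1, ∑ x2, ∑ y,
      W x1 x2 y * P x1 x2 i1 i2 i1 i2 y ≤ (Fintype.card Y : ℝ) := by
  obtain ⟨hP0, hPn, _, _, _⟩ := hP
  have hk1R : (0:ℝ) < (k1:ℝ) := by exact_mod_cast hk1
  have hk2R : (0:ℝ) < (k2:ℝ) := by exact_mod_cast hk2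
  have hW1' : ∀ x1 x2 y, W x1 x2 y ≤ 1 := by
    intro x1 x2 y
    rw [← hW1 x1 x2]
    exact Finset.single_le_sum (fun y' _ => hW0 x1 x2 y') (Finset.mem_univ y)
  have hinner : ∀ (i1 : Fin k1) (i2 : Fin k2),
      ∑ x1, ∑ x2, ∑ y, W x1 x2 y * P x1 x2 i1 i2 i1 i2 y ≤ (Fintype.card Y : ℝ) := by
    intro i1 i2
    calc ∑ x1, ∑ x2, ∑ y, W x1 x2 y * P x1 x2 i1 i2 i1 i2 y
        ≤ ∑ x1, ∑ x2, ∑ y, P x1 x2 i1 i2 i1 i2 y :=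
          Finset.sum_le_sum fun x1 _ => Finset.sum_le_sum fun x2 _ =>
            Finset.sum_le_sum fun y _ =>
              mul_le_of_le_one_left (hP0 x1 x2 i1 i2 i1 i2 y) (hW1' x1 x2 y)
      _ = ∑ y, ∑ x1, ∑ x2, P x1 x2 i1 i2 i1 i2 y :=
          rotR3 (fun x1 x2 y => P x1 x2 i1 i2 i1 i2 y)
      _ ≤ ∑ _y : Y, (1:ℝ) := by
          refine Finset.sum_le_sum fun y _ => ?_
          calc ∑ x1, ∑ x2, P x1 x2 i1 i2 i1 i2 y
              ≤ ∑ x1, ∑ x2, ∑ j1, ∑ j2, P x1 x2 j1 j2 i1 i2 y := by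
                refine Finset.sum_le_sum fun x1 _ => Finset.sum_le_sum fun x2 _ => ?_
                calc P x1 x2 i1 i2 i1 i2 y
                    ≤ ∑ j2, P x1 x2 i1 j2 i1 i2 y :=
                      Finset.single_le_sum (f := fun j2 => P x1 x2 i1 j2 i1 i2 y)
                        (fun j _ => hP0 x1 x2 i1 j i1 i2 y) (Finset.mem_univ i2)
                  _ ≤ ∑ j1, ∑ j2, P x1 x2 j1 j2 i1 i2 y :=
                      Finset.single_le_sum
                        (f := fun j1 => ∑ j2, P x1 x2 j1 j2 i1 i2 y)
                        (fun j _ => Finset.sum_nonneg fun j2 _ => hP0 x1 x2 j j2 i1 i2 y)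
                        (Finset.mem_univ i1)
            _ = 1 := hPn i1 i2 y
      _ = (Fintype.card Y : ℝ) := by
          rw [Finset.sum_const, nsmul_eq_mul, Finset.card_univ, mul_one]
  calc (1 / ((k1 : ℝ) * (k2 : ℝ))) * ∑ i1, ∑ i2, ∑ x1, ∑ x2, ∑ y,
        W x1 x2 y * P x1 x2 i1 i2 i1 i2 y
      ≤ (1 / ((k1 : ℝ) * (k2 : ℝ))) * ∑ _i1 : Fin k1, ∑ _i2 : Fin k2,
          (Fintype.card Y : ℝ) := by
        refine mul_le_mul_of_nonneg_left ?_ (by positivity)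
        exact Finset.sum_le_sum fun i1 _ => Finset.sum_le_sum fun i2 _ => hinner i1 i2
    _ = (Fintype.card Y : ℝ) := by
        rw [Finset.sum_const, Finset.sum_const, Finset.card_univ, Fintype.card_fin,
          nsmul_eq_mul, nsmul_eq_mul, Finset.card_univ, Fintype.card_fin]
        field_simp

lemma box_exists [Nonempty X1] [Nonempty X2] {k1 k2 : ℕ} (hk1 : 0 < k1) (hk2 : 0 < k2) :
    IsNSBox k1 k2 (fun (_ : X1) (_ : X2) (_ : Fin k1) (_ : Fin k2) (_ : Fin k1)
      (_ : Fin k2) (_ : Y) =>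
      1 / ((Fintype.card X1 : ℝ) * (Fintype.card X2 : ℝ) * k1 * k2)) := by
  have hx1 : (0:ℝ) < (Fintype.card X1 : ℝ) := by
    exact_mod_cast Fintype.card_pos
  have hx2 : (0:ℝ) < (Fintype.card X2 : ℝ) := by
    exact_mod_cast Fintype.card_pos
  have hk1R : (0:ℝ) < (k1:ℝ) := by exact_mod_cast hk1
  have hk2R : (0:ℝ) < (k2:ℝ) := by exact_mod_cast hk2
  refine ⟨fun _ _ _ _ _ _ _ => by positivity, ?_, fun _ _ _ _ _ _ _ => rfl,
    fun _ _ _ _ _ _ _ => rfl, fun _ _ _ _ _ _ => rfl⟩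
  intro i1 i2 y
  simp only [Finset.sum_const, nsmul_eq_mul, Finset.card_univ, Fintype.card_fin]
  field_simp

end FinalAux

/-- The set of non-signaling box values. -/
def boxSet (X1 X2 Y : Type*) [Fintype X1] [Fintype X2] [Fintype Y]
    (W : X1 → X2 → Y → ℝ) (k1 k2 : ℕ) : Set ℝ :=
  {s : ℝ | ∃ P : X1 → X2 → Fin k1 → Fin k2 → Fin k1 → Fin k2 → Y → ℝ,
    IsNSBox k1 k2 P ∧
    s = (1 / ((k1 : ℝ) * (k2 : ℝ))) * ∑ i1, ∑ i2, ∑ x1, ∑ x2, ∑ y,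
      W x1 x2 y * P x1 x2 i1 i2 i1 i2 y}

/-- The feasible-value set of the orbit LP. -/
def lpSet (G : Type*) [Group G] (X1 X2 Y : Type*) [Fintype X1] [Fintype X2] [Fintype Y]
    [MulAction G X1] [MulAction G X2] [MulAction G Y]
    (W : X1 → X2 → Y → ℝ) (k1 k2 : ℕ) : Set ℝ :=
  {s : ℝ |
      ∃ (r r1 r2 : Set (X1 × X2 × Y) → ℝ) (p : Set (X1 × X2) → ℝ),
      (∀ v : Set Y, IsOrbit G v →
        (∑ᶠ w ∈ {w : Set (X1 × X2 × Y) | IsOrbit G w ∧ (fun t => t.2.2) '' w = v}, r w)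
          = (v.ncard : ℝ)) ∧
      (∀ v2 : Set (X2 × Y), IsOrbit G v2 →
        (∑ᶠ w ∈ {w : Set (X1 × X2 × Y) | IsOrbit G w ∧ Prod.snd '' w = v2}, r1 w)
          = (k1 : ℝ) *
            ∑ᶠ w ∈ {w : Set (X1 × X2 × Y) | IsOrbit G w ∧ Prod.snd '' w = v2}, r w) ∧
      (∀ v1 : Set (X1 × Y), IsOrbit G v1 →
        (∑ᶠ w ∈ {w : Set (X1 × X2 × Y) |
            IsOrbit G w ∧ (fun t => (t.1, t.2.2)) '' w = v1}, r2 w)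
          = (k2 : ℝ) *
            ∑ᶠ w ∈ {w : Set (X1 × X2 × Y) |
              IsOrbit G w ∧ (fun t => (t.1, t.2.2)) '' w = v1}, r w) ∧
      (∀ v2 : Set (X2 × Y), IsOrbit G v2 →
        (∑ᶠ u ∈ {u : Set (X1 × X2) | IsOrbit G u ∧ Prod.snd '' u = Prod.fst '' v2}, p u)
          = ((Prod.fst '' v2).ncard : ℝ) / (v2.ncard : ℝ) * (k1 : ℝ) *
            ∑ᶠ w ∈ {w : Set (X1 × X2 × Y) | IsOrbit G w ∧ Prod.snd '' w = v2}, r2 w) ∧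
      (∀ v1 : Set (X1 × Y), IsOrbit G v1 →
        (∑ᶠ u ∈ {u : Set (X1 × X2) | IsOrbit G u ∧ Prod.fst '' u = Prod.fst '' v1}, p u)
          = ((Prod.fst '' v1).ncard : ℝ) / (v1.ncard : ℝ) * (k2 : ℝ) *
            ∑ᶠ w ∈ {w : Set (X1 × X2 × Y) |
              IsOrbit G w ∧ (fun t => (t.1, t.2.2)) '' w = v1}, r1 w) ∧
      (∀ w : Set (X1 × X2 × Y), IsOrbit G w → 0 ≤ r w) ∧
      (∀ w : Set (X1 × X2 × Y), IsOrbit G w → r w ≤ r1 w) ∧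
      (∀ w : Set (X1 × X2 × Y), IsOrbit G w →
        r1 w ≤ (w.ncard : ℝ) / ((((fun t => (t.1, t.2.1)) '' w : Set (X1 × X2)).ncard : ℝ))
          * p ((fun t => (t.1, t.2.1)) '' w)) ∧
      (∀ w : Set (X1 × X2 × Y), IsOrbit G w → r w ≤ r2 w) ∧
      (∀ w : Set (X1 × X2 × Y), IsOrbit G w →
        r2 w ≤ (w.ncard : ℝ) / ((((fun t => (t.1, t.2.1)) '' w : Set (X1 × X2)).ncard : ℝ))
          * p ((fun t => (t.1, t.2.1)) '' w)) ∧
      (∀ w : Set (X1 × X2 × Y), IsOrbit G w →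
        0 ≤ (w.ncard : ℝ) / ((((fun t => (t.1, t.2.1)) '' w : Set (X1 × X2)).ncard : ℝ))
            * p ((fun t => (t.1, t.2.1)) '' w) - r1 w - r2 w + r w) ∧
      s = (1 / ((k1 : ℝ) * (k2 : ℝ))) *
        ∑ᶠ w ∈ {w : Set (X1 × X2 × Y) | IsOrbit G w}, Wval W w * r w}

/-- For a MAC `W` invariant under the action of a group `G`, `S^{NS}(W,k1,k2)` equals
the value of the orbit-wise symmetrized linear program of Theorem `theo:polyLP`.
Orbits are represented as subsets, projections of orbits as images, and `|⬝|` as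
`Set.ncard`. -/
theorem SNS_eq_orbitLP {G X1 X2 Y : Type*} [Group G]
    [Fintype X1] [Fintype X2] [Fintype Y]
    [MulAction G X1] [MulAction G X2] [MulAction G Y]
    (W : X1 → X2 → Y → ℝ)
    (hW0 : ∀ x1 x2 y, 0 ≤ W x1 x2 y)
    (hW1 : ∀ x1 x2, ∑ y, W x1 x2 y = 1)
    (hInv : ∀ (g : G) (x1 : X1) (x2 : X2) (y : Y),
      W (g • x1) (g • x2) (g • y) = W x1 x2 y)
    (k1 k2 : ℕ) (hk1 : 0 < k1) (hk2 : 0 < k2) :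
    SNS W k1 k2 = sSup {s : ℝ |
      ∃ (r r1 r2 : Set (X1 × X2 × Y) → ℝ) (p : Set (X1 × X2) → ℝ),
      -- first constraint: ∑_{w : w_Y = v} r_w = |v| for every orbit v of Y
      (∀ v : Set Y, IsOrbit G v →
        (∑ᶠ w ∈ {w : Set (X1 × X2 × Y) | IsOrbit G w ∧ (fun t => t.2.2) '' w = v}, r w)
          = (v.ncard : ℝ)) ∧
      -- ∑_{w : w_{X2 Y} = v2} r^1_w = k1 ∑_{w : w_{X2 Y} = v2} r_w
      (∀ v2 : Set (X2 × Y), IsOrbit G v2 →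
        (∑ᶠ w ∈ {w : Set (X1 × X2 × Y) | IsOrbit G w ∧ Prod.snd '' w = v2}, r1 w)
          = (k1 : ℝ) *
            ∑ᶠ w ∈ {w : Set (X1 × X2 × Y) | IsOrbit G w ∧ Prod.snd '' w = v2}, r w) ∧
      -- ∑_{w : w_{X1 Y} = v1} r^2_w = k2 ∑_{w : w_{X1 Y} = v1} r_w
      (∀ v1 : Set (X1 × Y), IsOrbit G v1 →
        (∑ᶠ w ∈ {w : Set (X1 × X2 × Y) |
            IsOrbit G w ∧ (fun t => (t.1, t.2.2)) '' w = v1}, r2 w)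
          = (k2 : ℝ) *
            ∑ᶠ w ∈ {w : Set (X1 × X2 × Y) |
              IsOrbit G w ∧ (fun t => (t.1, t.2.2)) '' w = v1}, r w) ∧
      -- ∑_{u : u_{X2} = (v2)_{X2}} p_u = (|(v2)_{X2}|/|v2|) k1 ∑_{w : w_{X2 Y} = v2} r^2_w
      (∀ v2 : Set (X2 × Y), IsOrbit G v2 →
        (∑ᶠ u ∈ {u : Set (X1 × X2) | IsOrbit G u ∧ Prod.snd '' u = Prod.fst '' v2}, p u)
          = ((Prod.fst '' v2).ncard : ℝ) / (v2.ncard : ℝ) * (k1 : ℝ) *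
            ∑ᶠ w ∈ {w : Set (X1 × X2 × Y) | IsOrbit G w ∧ Prod.snd '' w = v2}, r2 w) ∧
      -- ∑_{u : u_{X1} = (v1)_{X1}} p_u = (|(v1)_{X1}|/|v1|) k2 ∑_{w : w_{X1 Y} = v1} r^1_w
      (∀ v1 : Set (X1 × Y), IsOrbit G v1 →
        (∑ᶠ u ∈ {u : Set (X1 × X2) | IsOrbit G u ∧ Prod.fst '' u = Prod.fst '' v1}, p u)
          = ((Prod.fst '' v1).ncard : ℝ) / (v1.ncard : ℝ) * (k2 : ℝ) *
            ∑ᶠ w ∈ {w : Set (X1 × X2 × Y) |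
              IsOrbit G w ∧ (fun t => (t.1, t.2.2)) '' w = v1}, r1 w) ∧
      -- inequality constraints, with w_{X1 X2} the image of w in X1 × X2
      (∀ w : Set (X1 × X2 × Y), IsOrbit G w → 0 ≤ r w) ∧
      (∀ w : Set (X1 × X2 × Y), IsOrbit G w → r w ≤ r1 w) ∧
      (∀ w : Set (X1 × X2 × Y), IsOrbit G w →
        r1 w ≤ (w.ncard : ℝ) / ((((fun t => (t.1, t.2.1)) '' w : Set (X1 × X2)).ncard : ℝ))
          * p ((fun t => (t.1, t.2.1)) '' w)) ∧
      (∀ w : Set (X1 × X2 × Y), IsOrbit G w → r w ≤ r2 w) ∧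
      (∀ w : Set (X1 × X2 × Y), IsOrbit G w →
        r2 w ≤ (w.ncard : ℝ) / ((((fun t => (t.1, t.2.1)) '' w : Set (X1 × X2)).ncard : ℝ))
          * p ((fun t => (t.1, t.2.1)) '' w)) ∧
      (∀ w : Set (X1 × X2 × Y), IsOrbit G w →
        0 ≤ (w.ncard : ℝ) / ((((fun t => (t.1, t.2.1)) '' w : Set (X1 × X2)).ncard : ℝ))
            * p ((fun t => (t.1, t.2.1)) '' w) - r1 w - r2 w + r w) ∧
      -- objective value
      s = (1 / ((k1 : ℝ) * (k2 : ℝ))) *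
        ∑ᶠ w ∈ {w : Set (X1 × X2 × Y) | IsOrbit G w}, Wval W w * r w} := by
  classical
  show sSup (boxSet X1 X2 Y W k1 k2) = sSup (lpSet G X1 X2 Y W k1 k2)
  by_cases hYne : Nonempty Y
  case neg =>
    by_cases hX : Nonempty X1 ∧ Nonempty X2
    · obtain ⟨⟨x1⟩, ⟨x2⟩⟩ := hX
      have h := hW1 x1 x2
      haveI : IsEmpty Y := not_nonempty_iff.mp hYne
      rw [Finset.univ_eq_empty, Finset.sum_empty] at h
      norm_num at h
    · haveI hIE : IsEmpty Y := not_nonempty_iff.mp hYne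
      have hA : boxSet X1 X2 Y W k1 k2 = {0} := by
        ext s
        constructor
        · rintro ⟨P, hPb, rfl⟩
          simp only [Set.mem_singleton_iff]
          simp
        · rintro rfl
          refine ⟨fun _ _ _ _ _ _ _ => 0, ⟨?_, ?_, ?_, ?_, ?_⟩, ?_⟩
          · intro _ _ _ _ _ _ _; exact le_refl 0
          · intro _ _ y; exact (IsEmpty.false y).elim
          · intro _ _ _ _ _ _ _; rfl
          · intro _ _ _ _ _ _ _; rfl
          · intro _ _ _ _ _ _; rfl
          · simp
      have hB : lpSet G X1 X2 Y W k1 k2 = {0} := by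
        haveI : IsEmpty (X1 × X2 × Y) := by infer_instance
        have he : orbF G (X1 × X2 × Y) = ∅ := by
          rw [Finset.eq_empty_iff_forall_notMem]
          intro w hw
          obtain ⟨t, -⟩ := mem_orbF.1 hw
          exact (IsEmpty.false t).elim
        ext s
        constructor
        · rintro ⟨r, r1, r2, p, -, -, -, -, -, -, -, -, -, -, -, rfl⟩
          simp only [Set.mem_singleton_iff]
          rw [finsum_mem_orbF', he, Finset.sum_empty, mul_zero]
        · rintro rfl
          refine ⟨fun _ => 0, fun _ => 0, fun _ => 0, fun _ => 0,
            ?_, ?_, ?_, ?_, ?_, ?_, ?_, ?_, ?_, ?_, ?_, ?_⟩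
          · rintro v ⟨y, -⟩; exact (IsEmpty.false y).elim
          · rintro v ⟨b, -⟩; exact (IsEmpty.false b.2).elim
          · rintro v ⟨b, -⟩; exact (IsEmpty.false b.2).elim
          · rintro v ⟨b, -⟩; exact (IsEmpty.false b.2).elim
          · rintro v ⟨b, -⟩; exact (IsEmpty.false b.2).elim
          · rintro w ⟨t, -⟩; exact (IsEmpty.false t.2.2).elim
          · rintro w ⟨t, -⟩; exact (IsEmpty.false t.2.2).elim
          · rintro w ⟨t, -⟩; exact (IsEmpty.false t.2.2).elim
          · rintro w ⟨t, -⟩; exact (IsEmpty.false t.2.2).elim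
          · rintro w ⟨t, -⟩; exact (IsEmpty.false t.2.2).elim
          · rintro w ⟨t, -⟩; exact (IsEmpty.false t.2.2).elim
          · rw [finsum_mem_orbF', he, Finset.sum_empty, mul_zero]
      rw [hA, hB]
  obtain ⟨y0⟩ := hYne
  by_cases hX1 : Nonempty X1
  swap
  · haveI hIE1 : IsEmpty X1 := not_nonempty_iff.mp hX1
    have hA : boxSet X1 X2 Y W k1 k2 = ∅ := by
      rw [Set.eq_empty_iff_forall_notMem]
      rintro s ⟨P, hPb, -⟩
      have h := hPb.2.1 ⟨0, hk1⟩ ⟨0, hk2⟩ y0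
      rw [Finset.univ_eq_empty, Finset.sum_empty] at h
      norm_num at h
    have hB : lpSet G X1 X2 Y W k1 k2 = ∅ := by
      rw [Set.eq_empty_iff_forall_notMem]
      rintro s ⟨r, r1, r2, p, h1, -, -, -, -, -, -, -, -, -, -, -⟩
      haveI : IsEmpty (X1 × X2 × Y) := by infer_instance
      have h0 := h1 _ ⟨y0, rfl⟩
      rw [finsum_mem_orbF
        (fun w => (fun t : X1 × X2 × Y => t.2.2) '' w = MulAction.orbit G y0)] at h0
      have he : orbF G (X1 × X2 × Y) = ∅ := by
        rw [Finset.eq_empty_iff_forall_notMem]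
        intro w hw
        obtain ⟨t, -⟩ := mem_orbF.1 hw
        exact (IsEmpty.false t).elim
      rw [he, Finset.filter_empty, Finset.sum_empty] at h0
      have hpos : (0:ℝ) < ((MulAction.orbit G y0).ncard : ℝ) := by
        exact_mod_cast orbit_ncard_pos (G := G) y0
      rw [← h0] at hpos
      exact lt_irrefl _ hpos
    rw [hA, hB]
  by_cases hX2 : Nonempty X2
  swap
  · haveI hIE2 : IsEmpty X2 := not_nonempty_iff.mp hX2
    have hA : boxSet X1 X2 Y W k1 k2 = ∅ := by
      rw [Set.eq_empty_iff_forall_notMem]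
      rintro s ⟨P, hPb, -⟩
      have h := hPb.2.1 ⟨0, hk1⟩ ⟨0, hk2⟩ y0
      simp at h
    have hB : lpSet G X1 X2 Y W k1 k2 = ∅ := by
      rw [Set.eq_empty_iff_forall_notMem]
      rintro s ⟨r, r1, r2, p, h1, -, -, -, -, -, -, -, -, -, -, -⟩
      haveI : IsEmpty (X1 × X2 × Y) := by infer_instance
      have h0 := h1 _ ⟨y0, rfl⟩
      rw [finsum_mem_orbF
        (fun w => (fun t : X1 × X2 × Y => t.2.2) '' w = MulAction.orbit G y0)] at h0
      have he : orbF G (X1 × X2 × Y) = ∅ := by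
        rw [Finset.eq_empty_iff_forall_notMem]
        intro w hw
        obtain ⟨t, -⟩ := mem_orbF.1 hw
        exact (IsEmpty.false t).elim
      rw [he, Finset.filter_empty, Finset.sum_empty] at h0
      have hpos : (0:ℝ) < ((MulAction.orbit G y0).ncard : ℝ) := by
        exact_mod_cast orbit_ncard_pos (G := G) y0
      rw [← h0] at hpos
      exact lt_irrefl _ hpos
    rw [hA, hB]
  -- main case : everything nonempty
  have hbddA : ∀ s ∈ boxSet X1 X2 Y W k1 k2, s ≤ (Fintype.card Y : ℝ) := by
    rintro s ⟨P, hPb, rfl⟩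
    exact box_bound hk1 hk2 W hW0 hW1 P hPb
  have hsub : boxSet X1 X2 Y W k1 k2 ⊆ lpSet G X1 X2 Y W k1 k2 := by
    rintro s ⟨P, hPb, rfl⟩
    obtain ⟨r, r1, r2, p, c1, c2, c3, c4, c5, c6, c7, c8, c9, c10, c11, heq⟩ :=
      dirA (G := G) W hInv hk1 hk2 P hPb
    exact ⟨r, r1, r2, p, c1, c2, c3, c4, c5, c6, c7, c8, c9, c10, c11, by rw [heq]⟩
  have hneA : (boxSet X1 X2 Y W k1 k2).Nonempty :=
    ⟨_, ⟨_, box_exists (X1 := X1) (X2 := X2) (Y := Y) hk1 hk2, rfl⟩⟩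
  have hles : ∀ s ∈ lpSet G X1 X2 Y W k1 k2,
      ∃ s' ∈ boxSet X1 X2 Y W k1 k2, s ≤ s' := by
    rintro s ⟨r, r1, r2, p, c1, c2, c3, c4, c5, c6, c7, c8, c9, c10, c11, rfl⟩
    obtain ⟨P, hPb, hle⟩ :=
      dirB W hW0 hInv hk1 hk2 r r1 r2 p c1 c2 c3 c4 c5 c6 c7 c8 c9 c10 c11
    refine ⟨_, ⟨P, hPb, rfl⟩, ?_⟩
    exact mul_le_mul_of_nonneg_left hle (by positivity)
  apply le_antisymm
  · refine csSup_le_csSup ?_ hneA hsub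
    refine ⟨(Fintype.card Y : ℝ), ?_⟩
    rintro s hs
    obtain ⟨s', hs', hle⟩ := hles s hs
    exact hle.trans (hbddA s' hs')
  · obtain ⟨s0, hs0⟩ := hneA
    refine csSup_le ⟨s0, hsub hs0⟩ ?_
    intro s hs
    obtain ⟨s', hs', hle⟩ := hles s hs
    exact hle.trans (le_csSup ⟨(Fintype.card Y : ℝ), fun t ht => hbddA t ht⟩ hs')
end

section
/- For any MAC W : X1 × X2 → Y on finite alphabets and positive integers k1, k2, the non-signaling assisted success probability is at most the relaxed non-signaling assisted success probability: S^NS(W,k1,k2) ≤ S^{NS̄}(W,k1,k2). -/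
open Finset

/-- The relaxed non-signaling assisted success probability `S^{NS̄}(W,k1,k2)`,
defined by a relaxation of the non-signaling linear program. -/
noncomputable def SNSbar {X1 X2 Y : Type*} [Fintype X1] [Fintype X2] [Fintype Y]
    (W : X1 → X2 → Y → ℝ) (k1 k2 : ℕ) : ℝ :=
  sSup {s : ℝ | ∃ (r : X1 → X2 → Y → ℝ) (p : X1 → X2 → ℝ),
    (∀ y, ∑ x1, ∑ x2, r x1 x2 y ≤ 1) ∧
    (∑ x1, ∑ x2, p x1 x2 = (k1 : ℝ) * (k2 : ℝ)) ∧
    (∀ x2 y, (k1 : ℝ) * ∑ x1, r x1 x2 y ≤ ∑ x1, p x1 x2) ∧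
    (∀ x1 y, (k2 : ℝ) * ∑ x2, r x1 x2 y ≤ ∑ x2, p x1 x2) ∧
    (∀ x1 x2 y, 0 ≤ r x1 x2 y) ∧ (∀ x1 x2 y, r x1 x2 y ≤ p x1 x2) ∧
    s = (1 / ((k1 : ℝ) * (k2 : ℝ))) * ∑ x1, ∑ x2, ∑ y, W x1 x2 y * r x1 x2 y}


private lemma sum_swap3 {α β γ : Type*} [Fintype α] [Fintype β] [Fintype γ]
    (f : α → β → γ → ℝ) :
    ∑ a, ∑ b, ∑ c, f a b c = ∑ b, ∑ c, ∑ a, f a b c := by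
  rw [Finset.sum_comm]
  exact Finset.sum_congr rfl fun b _ => Finset.sum_comm

private lemma sum_swap3' {α β γ : Type*} [Fintype α] [Fintype β] [Fintype γ]
    (f : α → β → γ → ℝ) :
    ∑ a, ∑ b, ∑ c, f a b c = ∑ c, ∑ a, ∑ b, f a b c :=
  (sum_swap3 fun c a b => f a b c).symm

private lemma sum_swap4 {α β γ δ : Type*} [Fintype α] [Fintype β] [Fintype γ] [Fintype δ]
    (f : α → β → γ → δ → ℝ) :
    ∑ a, ∑ b, ∑ c, ∑ d, f a b c d = ∑ c, ∑ d, ∑ a, ∑ b, f a b c d :=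
  calc ∑ a, ∑ b, ∑ c, ∑ d, f a b c d
      = ∑ a, ∑ c, ∑ d, ∑ b, f a b c d := Finset.sum_congr rfl fun a _ => sum_swap3 _
    _ = ∑ c, ∑ a, ∑ d, ∑ b, f a b c d := Finset.sum_comm
    _ = ∑ c, ∑ d, ∑ a, ∑ b, f a b c d := Finset.sum_congr rfl fun c _ => Finset.sum_comm

/-- The relaxed LP feasible-value set. -/
private def Bset {X1 X2 Y : Type*} [Fintype X1] [Fintype X2] [Fintype Y]
    (W : X1 → X2 → Y → ℝ) (k1 k2 : ℕ) : Set ℝ :=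
  {s : ℝ | ∃ (r : X1 → X2 → Y → ℝ) (p : X1 → X2 → ℝ),
    (∀ y, ∑ x1, ∑ x2, r x1 x2 y ≤ 1) ∧
    (∑ x1, ∑ x2, p x1 x2 = (k1 : ℝ) * (k2 : ℝ)) ∧
    (∀ x2 y, (k1 : ℝ) * ∑ x1, r x1 x2 y ≤ ∑ x1, p x1 x2) ∧
    (∀ x1 y, (k2 : ℝ) * ∑ x2, r x1 x2 y ≤ ∑ x2, p x1 x2) ∧
    (∀ x1 x2 y, 0 ≤ r x1 x2 y) ∧ (∀ x1 x2 y, r x1 x2 y ≤ p x1 x2) ∧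
    s = (1 / ((k1 : ℝ) * (k2 : ℝ))) * ∑ x1, ∑ x2, ∑ y, W x1 x2 y * r x1 x2 y}

private lemma Bset_le_card {X1 X2 Y : Type*} [Fintype X1] [Fintype X2] [Fintype Y]
    (W : X1 → X2 → Y → ℝ) (k1 k2 : ℕ) (hk1 : 0 < k1) (hk2 : 0 < k2)
    (hWle1 : ∀ x1 x2 y, W x1 x2 y ≤ 1) :
    ∀ s ∈ Bset W k1 k2, s ≤ (Fintype.card Y : ℝ) := by
  have hk1' : (0:ℝ) < (k1:ℝ) := by exact_mod_cast hk1
  have hk2' : (0:ℝ) < (k2:ℝ) := by exact_mod_cast hk2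
  have hkk : (0:ℝ) < (k1:ℝ) * (k2:ℝ) := mul_pos hk1' hk2'
  have hcpos : (0:ℝ) < 1 / ((k1:ℝ) * (k2:ℝ)) := by positivity
  rintro s ⟨r, p, h1, _h2, _h3, _h4, h5, _h6, hs⟩
  have hsum : ∑ x1, ∑ x2, ∑ y, W x1 x2 y * r x1 x2 y ≤ (Fintype.card Y : ℝ) := by
    have step1 : ∑ x1, ∑ x2, ∑ y, W x1 x2 y * r x1 x2 y
        ≤ ∑ x1, ∑ x2, ∑ y, r x1 x2 y := by
      refine Finset.sum_le_sum fun x1 _ => Finset.sum_le_sum fun x2 _ =>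
        Finset.sum_le_sum fun y _ => ?_
      calc W x1 x2 y * r x1 x2 y ≤ 1 * r x1 x2 y :=
            mul_le_mul_of_nonneg_right (hWle1 x1 x2 y) (h5 x1 x2 y)
        _ = r x1 x2 y := one_mul _
    have step2 : ∑ x1, ∑ x2, ∑ y, r x1 x2 y = ∑ y, ∑ x1, ∑ x2, r x1 x2 y :=
      sum_swap3' fun x1 x2 y => r x1 x2 y
    have step3 : ∑ y, ∑ x1, ∑ x2, r x1 x2 y ≤ ∑ _y : Y, (1:ℝ) :=
      Finset.sum_le_sum fun y _ => h1 y
    have step4 : ∑ _y : Y, (1:ℝ) = (Fintype.card Y : ℝ) := by simp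
    linarith
  have hc1 : 1 / ((k1:ℝ) * (k2:ℝ)) ≤ 1 := by
    rw [div_le_one hkk]
    have h1' : (1:ℝ) ≤ (k1:ℝ) := by exact_mod_cast hk1
    have h2' : (1:ℝ) ≤ (k2:ℝ) := by exact_mod_cast hk2
    nlinarith
  calc s = 1 / ((k1:ℝ) * (k2:ℝ)) * ∑ x1, ∑ x2, ∑ y, W x1 x2 y * r x1 x2 y := hs
    _ ≤ 1 / ((k1:ℝ) * (k2:ℝ)) * (Fintype.card Y : ℝ) :=
        mul_le_mul_of_nonneg_left hsum (le_of_lt hcpos)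
    _ ≤ 1 * (Fintype.card Y : ℝ) :=
        mul_le_mul_of_nonneg_right hc1 (by positivity)
    _ = (Fintype.card Y : ℝ) := one_mul _

private lemma Bset_bddAbove {X1 X2 Y : Type*} [Fintype X1] [Fintype X2] [Fintype Y]
    (W : X1 → X2 → Y → ℝ) (k1 k2 : ℕ) (hk1 : 0 < k1) (hk2 : 0 < k2)
    (hWle1 : ∀ x1 x2 y, W x1 x2 y ≤ 1) :
    BddAbove (Bset W k1 k2) :=
  ⟨_, Bset_le_card W k1 k2 hk1 hk2 hWle1⟩

private lemma sSup_Bset_nonneg {X1 X2 Y : Type*} [Fintype X1] [Fintype X2] [Fintype Y]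
    (W : X1 → X2 → Y → ℝ) (k1 k2 : ℕ) (hk1 : 0 < k1) (hk2 : 0 < k2)
    (hWle1 : ∀ x1 x2 y, W x1 x2 y ≤ 1) :
    0 ≤ sSup (Bset W k1 k2) := by
  classical
  have hk1' : (0:ℝ) < (k1:ℝ) := by exact_mod_cast hk1
  have hk2' : (0:ℝ) < (k2:ℝ) := by exact_mod_cast hk2
  have hkk : (0:ℝ) < (k1:ℝ) * (k2:ℝ) := mul_pos hk1' hk2'
  by_cases hX : Nonempty X1 ∧ Nonempty X2
  · obtain ⟨hX1, hX2⟩ := hX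
    have hcX1 : (0:ℝ) < (Fintype.card X1 : ℝ) := by
      exact_mod_cast Fintype.card_pos_iff.mpr hX1
    have hcX2 : (0:ℝ) < (Fintype.card X2 : ℝ) := by
      exact_mod_cast Fintype.card_pos_iff.mpr hX2
    have h0mem : (0:ℝ) ∈ Bset W k1 k2 := by
      refine ⟨fun _ _ _ => 0,
        fun _ _ => ((k1:ℝ) * (k2:ℝ)) / ((Fintype.card X1 : ℝ) * (Fintype.card X2 : ℝ)),
        by simp, ?_, ?_, ?_, by simp, ?_, by simp⟩
      · rw [Finset.sum_const, Finset.sum_const]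
        simp only [card_univ, nsmul_eq_mul, smul_eq_mul]
        field_simp
      · intro x2 y
        simp only [Finset.sum_const_zero, mul_zero]
        rw [Finset.sum_const]
        positivity
      · intro x1 y
        simp only [Finset.sum_const_zero, mul_zero]
        rw [Finset.sum_const]
        positivity
      · intro x1 x2 y
        positivity
    exact le_csSup (Bset_bddAbove W k1 k2 hk1 hk2 hWle1) h0mem
  · have hBempty : Bset W k1 k2 = ∅ := by
      rw [Set.eq_empty_iff_forall_notMem]
      rintro s ⟨r, p, _h1, h2, _⟩
      rw [not_and_or, not_nonempty_iff, not_nonempty_iff] at hX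
      rcases hX with hX1 | hX2
      · rw [Finset.univ_eq_empty, Finset.sum_empty] at h2
        exact absurd h2.symm (ne_of_gt hkk)
      · simp only [Finset.univ_eq_empty (α := X2), Finset.sum_empty,
          Finset.sum_const_zero] at h2
        exact absurd h2.symm (ne_of_gt hkk)
    rw [hBempty, Real.sSup_empty]

private lemma box_value_mem_Bset {X1 X2 Y : Type*} [Fintype X1] [Fintype X2] [Fintype Y]
    (W : X1 → X2 → Y → ℝ) (k1 k2 : ℕ) (hk1 : 0 < k1) (hk2 : 0 < k2) (y0 : Y)
    (P : X1 → X2 → Fin k1 → Fin k2 → Fin k1 → Fin k2 → Y → ℝ)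
    (hP : IsNSBox k1 k2 P) :
    ((1 / ((k1 : ℝ) * (k2 : ℝ))) * ∑ i1, ∑ i2, ∑ x1, ∑ x2, ∑ y,
      W x1 x2 y * P x1 x2 i1 i2 i1 i2 y) ∈ Bset W k1 k2 := by
  obtain ⟨hP0, hP1, hP3, hP4, hP5⟩ := hP
  set r : X1 → X2 → Y → ℝ := fun x1 x2 y => ∑ i1, ∑ i2, P x1 x2 i1 i2 i1 i2 y with hr
  set p : X1 → X2 → ℝ :=
    fun x1 x2 => ∑ i1, ∑ i2, ∑ j1, ∑ j2, P x1 x2 j1 j2 i1 i2 y0 with hp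
  have a0 : Fin k1 := ⟨0, hk1⟩
  have b0 : Fin k2 := ⟨0, hk2⟩
  refine ⟨r, p, ?_, ?_, ?_, ?_, ?_, ?_, ?_⟩
  · -- ∑ r ≤ 1
    intro y
    have e1 : ∑ x1, ∑ x2, r x1 x2 y
        = ∑ i1, ∑ i2, ∑ x1, ∑ x2, P x1 x2 i1 i2 i1 i2 y :=
      sum_swap4 fun x1 x2 i1 i2 => P x1 x2 i1 i2 i1 i2 y
    have key : ∀ (j1 : Fin k1) (j2 : Fin k2) (i1 : Fin k1) (i2 : Fin k2),
        ∑ x1, ∑ x2, P x1 x2 j1 j2 i1 i2 y = ∑ x1, ∑ x2, P x1 x2 j1 j2 a0 b0 y := by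
      intro j1 j2 i1 i2
      calc ∑ x1, ∑ x2, P x1 x2 j1 j2 i1 i2 y
          = ∑ x2, ∑ x1, P x1 x2 j1 j2 i1 i2 y := Finset.sum_comm
        _ = ∑ x2, ∑ x1, P x1 x2 j1 j2 a0 i2 y :=
            Finset.sum_congr rfl fun x2 _ => hP3 x2 j1 j2 i1 a0 i2 y
        _ = ∑ x1, ∑ x2, P x1 x2 j1 j2 a0 i2 y := Finset.sum_comm
        _ = ∑ x1, ∑ x2, P x1 x2 j1 j2 a0 b0 y :=
            Finset.sum_congr rfl fun x1 _ => hP4 x1 j1 j2 a0 i2 b0 y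
    have e2 : ∑ i1, ∑ i2, ∑ x1, ∑ x2, P x1 x2 i1 i2 i1 i2 y
        = ∑ i1, ∑ i2, ∑ x1, ∑ x2, P x1 x2 i1 i2 a0 b0 y :=
      Finset.sum_congr rfl fun i1 _ => Finset.sum_congr rfl fun i2 _ => key i1 i2 i1 i2
    have e3 : ∑ i1, ∑ i2, ∑ x1, ∑ x2, P x1 x2 i1 i2 a0 b0 y
        = ∑ x1, ∑ x2, ∑ i1, ∑ i2, P x1 x2 i1 i2 a0 b0 y :=
      sum_swap4 fun i1 i2 x1 x2 => P x1 x2 i1 i2 a0 b0 y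
    rw [e1, e2, e3, hP1 a0 b0 y]
  · -- ∑ p = k1 k2
    have e1 : ∑ x1, ∑ x2, p x1 x2
        = ∑ i1, ∑ i2, ∑ x1, ∑ x2, ∑ j1, ∑ j2, P x1 x2 j1 j2 i1 i2 y0 :=
      sum_swap4 fun x1 x2 i1 i2 => ∑ j1, ∑ j2, P x1 x2 j1 j2 i1 i2 y0
    rw [e1]
    have e2 : ∀ (i1 : Fin k1) (i2 : Fin k2),
        ∑ x1, ∑ x2, ∑ j1, ∑ j2, P x1 x2 j1 j2 i1 i2 y0 = 1 := fun i1 i2 => hP1 i1 i2 y0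
    rw [Finset.sum_congr rfl fun i1 _ => Finset.sum_congr rfl fun i2 _ => e2 i1 i2]
    simp [Finset.sum_const, card_univ, mul_comm]
  · -- k1 * ∑_{x1} r ≤ ∑_{x1} p
    intro x2 y
    have e1 : ∑ x1, r x1 x2 y = ∑ i1, ∑ i2, ∑ x1, P x1 x2 i1 i2 i1 i2 y :=
      sum_swap3 fun x1 i1 i2 => P x1 x2 i1 i2 i1 i2 y
    have hT : ∀ a : Fin k1, ∑ i1, ∑ i2, ∑ x1, P x1 x2 i1 i2 i1 i2 y
        = ∑ i1, ∑ i2, ∑ x1, P x1 x2 i1 i2 a i2 y := by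
      intro a
      exact Finset.sum_congr rfl fun i1 _ => Finset.sum_congr rfl fun i2 _ =>
        hP3 x2 i1 i2 i1 a i2 y
    have hTa : ∀ a : Fin k1, ∑ i1, ∑ i2, ∑ x1, P x1 x2 i1 i2 a i2 y
        ≤ ∑ i2, ∑ x1, ∑ j1, ∑ j2, P x1 x2 j1 j2 a i2 y0 := by
      intro a
      rw [Finset.sum_comm]
      refine Finset.sum_le_sum fun i2 _ => ?_
      rw [Finset.sum_comm]
      refine Finset.sum_le_sum fun x1 _ => ?_
      have h1 : ∑ i1, P x1 x2 i1 i2 a i2 y ≤ ∑ j1, ∑ j2, P x1 x2 j1 j2 a i2 y :=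
        Finset.sum_le_sum fun j1 _ =>
          Finset.single_le_sum (fun j2 _ => hP0 x1 x2 j1 j2 a i2 y) (mem_univ i2)
      calc ∑ i1, P x1 x2 i1 i2 a i2 y ≤ ∑ j1, ∑ j2, P x1 x2 j1 j2 a i2 y := h1
        _ = ∑ j1, ∑ j2, P x1 x2 j1 j2 a i2 y0 := hP5 x1 x2 a i2 y y0
    have eLHS : (k1:ℝ) * ∑ x1, r x1 x2 y
        = ∑ a : Fin k1, ∑ i1, ∑ i2, ∑ x1, P x1 x2 i1 i2 a i2 y := by
      rw [e1]
      rw [Finset.sum_congr rfl fun a _ => (hT a).symm]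
      simp [Finset.sum_const, card_univ]
    have eRHS : ∑ x1, p x1 x2
        = ∑ a : Fin k1, ∑ i2, ∑ x1, ∑ j1, ∑ j2, P x1 x2 j1 j2 a i2 y0 :=
      sum_swap3 fun x1 a i2 => ∑ j1, ∑ j2, P x1 x2 j1 j2 a i2 y0
    rw [eLHS, eRHS]
    exact Finset.sum_le_sum fun a _ => hTa a
  · -- k2 * ∑_{x2} r ≤ ∑_{x2} p
    intro x1 y
    have e1 : ∑ x2, r x1 x2 y = ∑ i1, ∑ i2, ∑ x2, P x1 x2 i1 i2 i1 i2 y :=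
      sum_swap3 fun x2 i1 i2 => P x1 x2 i1 i2 i1 i2 y
    have hT : ∀ b : Fin k2, ∑ i1, ∑ i2, ∑ x2, P x1 x2 i1 i2 i1 i2 y
        = ∑ i1, ∑ i2, ∑ x2, P x1 x2 i1 i2 i1 b y := by
      intro b
      exact Finset.sum_congr rfl fun i1 _ => Finset.sum_congr rfl fun i2 _ =>
        hP4 x1 i1 i2 i1 i2 b y
    have hTb : ∀ b : Fin k2, ∑ i1, ∑ i2, ∑ x2, P x1 x2 i1 i2 i1 b y
        ≤ ∑ i1, ∑ x2, ∑ j1, ∑ j2, P x1 x2 j1 j2 i1 b y0 := by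
      intro b
      refine Finset.sum_le_sum fun i1 _ => ?_
      rw [Finset.sum_comm]
      refine Finset.sum_le_sum fun x2 _ => ?_
      have h1 : ∑ i2, P x1 x2 i1 i2 i1 b y ≤ ∑ j1, ∑ j2, P x1 x2 j1 j2 i1 b y := by
        have h2 : ∑ i2, P x1 x2 i1 i2 i1 b y
            = (fun j1 => ∑ j2, P x1 x2 j1 j2 i1 b y) i1 := rfl
        rw [h2]
        exact Finset.single_le_sum
          (fun j1 _ => Finset.sum_nonneg fun j2 _ => hP0 x1 x2 j1 j2 i1 b y)
          (mem_univ i1)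
      calc ∑ i2, P x1 x2 i1 i2 i1 b y ≤ ∑ j1, ∑ j2, P x1 x2 j1 j2 i1 b y := h1
        _ = ∑ j1, ∑ j2, P x1 x2 j1 j2 i1 b y0 := hP5 x1 x2 i1 b y y0
    have eLHS : (k2:ℝ) * ∑ x2, r x1 x2 y
        = ∑ b : Fin k2, ∑ i1, ∑ i2, ∑ x2, P x1 x2 i1 i2 i1 b y := by
      rw [e1]
      rw [Finset.sum_congr rfl fun b _ => (hT b).symm]
      simp [Finset.sum_const, card_univ]
    have eRHS : ∑ x2, p x1 x2
        = ∑ b : Fin k2, ∑ i1, ∑ x2, ∑ j1, ∑ j2, P x1 x2 j1 j2 i1 b y0 := by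
      have e2 : ∑ x2, p x1 x2
          = ∑ i1, ∑ b, ∑ x2, ∑ j1, ∑ j2, P x1 x2 j1 j2 i1 b y0 :=
        sum_swap3 fun x2 i1 b => ∑ j1, ∑ j2, P x1 x2 j1 j2 i1 b y0
      rw [e2]
      exact Finset.sum_comm
    rw [eLHS, eRHS]
    exact Finset.sum_le_sum fun b _ => hTb b
  · -- 0 ≤ r
    intro x1 x2 y
    exact Finset.sum_nonneg fun i1 _ => Finset.sum_nonneg fun i2 _ =>
      hP0 x1 x2 i1 i2 i1 i2 y
  · -- r ≤ p
    intro x1 x2 y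
    have h1 : r x1 x2 y ≤ ∑ i1, ∑ i2, ∑ j1, ∑ j2, P x1 x2 j1 j2 i1 i2 y := by
      refine Finset.sum_le_sum fun i1 _ => Finset.sum_le_sum fun i2 _ => ?_
      calc P x1 x2 i1 i2 i1 i2 y ≤ ∑ j2, P x1 x2 i1 j2 i1 i2 y :=
          Finset.single_le_sum (fun j2 _ => hP0 x1 x2 i1 j2 i1 i2 y) (mem_univ i2)
        _ ≤ ∑ j1, ∑ j2, P x1 x2 j1 j2 i1 i2 y :=
          Finset.single_le_sum
            (fun j1 _ => Finset.sum_nonneg fun j2 _ => hP0 x1 x2 j1 j2 i1 i2 y)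
            (mem_univ i1)
    have h2 : ∑ i1, ∑ i2, ∑ j1, ∑ j2, P x1 x2 j1 j2 i1 i2 y = p x1 x2 :=
      Finset.sum_congr rfl fun i1 _ => Finset.sum_congr rfl fun i2 _ =>
        hP5 x1 x2 i1 i2 y y0
    linarith
  · -- objective
    congr 1
    calc ∑ i1, ∑ i2, ∑ x1, ∑ x2, ∑ y, W x1 x2 y * P x1 x2 i1 i2 i1 i2 y
        = ∑ x1, ∑ x2, ∑ i1, ∑ i2, ∑ y, W x1 x2 y * P x1 x2 i1 i2 i1 i2 y :=
          sum_swap4 fun i1 i2 x1 x2 => ∑ y, W x1 x2 y * P x1 x2 i1 i2 i1 i2 y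
      _ = ∑ x1, ∑ x2, ∑ y, ∑ i1, ∑ i2, W x1 x2 y * P x1 x2 i1 i2 i1 i2 y :=
          Finset.sum_congr rfl fun x1 _ => Finset.sum_congr rfl fun x2 _ =>
            sum_swap3' fun i1 i2 y => W x1 x2 y * P x1 x2 i1 i2 i1 i2 y
      _ = ∑ x1, ∑ x2, ∑ y, W x1 x2 y * r x1 x2 y := by
          refine Finset.sum_congr rfl fun x1 _ => Finset.sum_congr rfl fun x2 _ =>
            Finset.sum_congr rfl fun y _ => ?_
          rw [hr]
          simp [Finset.mul_sum]

/-- The non-signaling assisted success probability is at most the relaxed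
non-signaling assisted success probability: `S^{NS}(W,k1,k2) ≤ S^{NS̄}(W,k1,k2)`. -/
theorem SNS_le_SNSbar {X1 X2 Y : Type*} [Fintype X1] [Fintype X2] [Fintype Y]
    (W : X1 → X2 → Y → ℝ)
    (hW0 : ∀ x1 x2 y, 0 ≤ W x1 x2 y)
    (hW1 : ∀ x1 x2, ∑ y, W x1 x2 y = 1)
    (k1 k2 : ℕ) (hk1 : 0 < k1) (hk2 : 0 < k2) :
    SNS W k1 k2 ≤ SNSbar W k1 k2 := by
  classical
  have hWle1 : ∀ x1 x2 y, W x1 x2 y ≤ 1 := by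
    intro x1 x2 y
    calc W x1 x2 y ≤ ∑ y', W x1 x2 y' :=
          Finset.single_le_sum (fun y' _ => hW0 x1 x2 y') (mem_univ y)
      _ = 1 := hW1 x1 x2
  have hnn : 0 ≤ sSup (Bset W k1 k2) := sSup_Bset_nonneg W k1 k2 hk1 hk2 hWle1
  have hSNSbar : SNSbar W k1 k2 = sSup (Bset W k1 k2) := rfl
  rw [hSNSbar, SNS]
  apply Real.sSup_le _ hnn
  rintro s ⟨P, hP, hs⟩
  by_cases hY : Nonempty Y
  · obtain ⟨y0⟩ := hY
    rw [hs]
    exact le_csSup (Bset_bddAbove W k1 k2 hk1 hk2 hWle1)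
      (box_value_mem_Bset W k1 k2 hk1 hk2 y0 P hP)
  · rw [not_nonempty_iff] at hY
    have hs0 : s = 0 := by
      rw [hs]
      simp [Finset.univ_eq_empty (α := Y)]
    rw [hs0]
    exact hnn
end
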